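/- arXiv:1111.0264 — 8 statements merged into one kernel-verified Lean document; each statement's English description precedes it below -/
import Mathlib

section
/- Let w⊥ be a linear subspace of v and ξ ∈ w⊥ a nonzero vector. For Z ∈ z, write J_Z ξ = P_Z ξ + F_Z ξ where F_Z ξ is the orthogonal projection of J_Z ξ onto w⊥. Then there exists an orthonormal basis {Z₁,…,Z_m} of z and a uniquely determined m-tuple (φ₁,…,φ_m) with 0 ≤ φ₁ ≤ ⋯ ≤ φ_m ≤ π/2 such that ‖F_{Z_i} ξ‖² = cos²(φ_i)‖ξ‖² for each i, and ⟨F_{Z_i}ξ, F_{Z_j}ξ⟩ = 0 for i ≠ j. -/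
open RealInnerProductSpace

section Aux

variable {z : Type*} [NormedAddCommGroup z] [InnerProductSpace ℝ z] [FiniteDimensional ℝ z]

/-- For an antitone tuple, membership of the level set `{j | c ≤ f j}` is determined by the
cardinality of the level set. -/
lemma aux_mem_iff_lt_card {m : ℕ} {f : Fin m → ℝ} (hf : Antitone f) (c : ℝ) (i : Fin m) :
    c ≤ f i ↔ (i : ℕ) < (Finset.univ.filter (fun j => c ≤ f j)).card := by
  constructor
  · intro h
    have hsub : Finset.Iic i ⊆ Finset.univ.filter (fun j => c ≤ f j) := by
      intro j hj
      simp only [Finset.mem_Iic] at hj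
      exact Finset.mem_filter.2 ⟨Finset.mem_univ _, le_trans h (hf hj)⟩
    have := Finset.card_le_card hsub
    rw [Fin.card_Iic] at this
    omega
  · intro h
    by_contra hc
    have hsub : Finset.univ.filter (fun j => c ≤ f j) ⊆ Finset.Iio i := by
      intro j hj
      rw [Finset.mem_filter] at hj
      rw [Finset.mem_Iio]
      by_contra hji
      exact hc (le_trans hj.2 (hf (not_lt.1 hji)))
    have := Finset.card_le_card hsub
    rw [Fin.card_Iio] at this
    omega

/-- The kernel of `T - c • id` for an operator diagonalized by a basis. -/
lemma aux_ker_eq_span {m : ℕ} (b : Module.Basis (Fin m) ℝ z) (T : z →ₗ[ℝ] z) (lam : Fin m → ℝ)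
    (h : ∀ i, T (b i) = lam i • b i) (c : ℝ) :
    LinearMap.ker (T - c • (LinearMap.id : z →ₗ[ℝ] z))
      = Submodule.span ℝ (b '' {i | lam i = c}) := by
  have hS : ∀ x : z, (T - c • (LinearMap.id : z →ₗ[ℝ] z)) x = T x - c • x := by
    intro x; simp
  apply le_antisymm
  · intro x hx
    rw [LinearMap.mem_ker, hS] at hx
    have hrepr : x = ∑ i, b.repr x i • b i := (b.sum_repr x).symm
    have hTx : T x - c • x = ∑ i, ((lam i - c) * b.repr x i) • b i := by
      conv_lhs => rw [hrepr]
      rw [map_sum, Finset.smul_sum, ← Finset.sum_sub_distrib]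
      refine Finset.sum_congr rfl fun i _ => ?_
      rw [map_smul, h i, smul_comm, ← sub_smul, smul_smul]
    rw [hx] at hTx
    have hcoef : ∀ i, (lam i - c) * b.repr x i = 0 :=
      Fintype.linearIndependent_iff.1 b.linearIndependent
        (fun i => (lam i - c) * b.repr x i) hTx.symm
    have hzero : ∀ i, lam i ≠ c → b.repr x i = 0 := by
      intro i hi
      rcases mul_eq_zero.1 (hcoef i) with h' | h'
      · exact absurd (sub_eq_zero.1 h') hi
      · exact h'
    rw [hrepr]
    refine Submodule.sum_mem _ fun i _ => ?_
    by_cases hic : lam i = c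
    · exact Submodule.smul_mem _ _ (Submodule.subset_span ⟨i, hic, rfl⟩)
    · rw [hzero i hic, zero_smul]; exact Submodule.zero_mem _
  · rw [Submodule.span_le]
    rintro x ⟨i, hi, rfl⟩
    rw [SetLike.mem_coe, LinearMap.mem_ker, hS, h i]
    rw [Set.mem_setOf_eq] at hi
    rw [hi, sub_self]

/-- Dimension of the span of a sub-family of a linearly independent family. -/
lemma aux_finrank_span {m : ℕ} {Z : Fin m → z} (hZ : LinearIndependent ℝ Z)
    (s : Finset (Fin m)) :
    Module.finrank ℝ (Submodule.span ℝ (Z '' ↑s)) = s.card := by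
  have himg : Z '' ↑s = Set.range (Z ∘ (Subtype.val : {i // i ∈ s} → Fin m)) := by
    ext x
    constructor
    · rintro ⟨i, hi, rfl⟩; exact ⟨⟨i, hi⟩, rfl⟩
    · rintro ⟨⟨i, hi⟩, rfl⟩; exact ⟨i, hi, rfl⟩
  rw [himg, finrank_span_eq_card (hZ.comp Subtype.val Subtype.val_injective)]
  exact Fintype.card_coe s

/-- Uniqueness of the (sorted) eigenvalue tuple of an operator diagonalized by two
orthonormal bases. -/
lemma aux_eigen_unique {m : ℕ} (hm : m = Module.finrank ℝ z)
    (T : z →ₗ[ℝ] z) {lam mu : Fin m → ℝ} {Z Y : Fin m → z}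
    (hZ : Orthonormal ℝ Z) (hY : Orthonormal ℝ Y)
    (hTZ : ∀ i, T (Z i) = lam i • Z i) (hTY : ∀ i, T (Y i) = mu i • Y i)
    (hlam : Antitone lam) (hmu : Antitone mu) : lam = mu := by
  rcases Nat.eq_zero_or_pos m with hm0 | hm0
  · subst hm0; funext i; exact i.elim0
  have : Nonempty (Fin m) := ⟨⟨0, hm0⟩⟩
  have hcard : Fintype.card (Fin m) = Module.finrank ℝ z := by simp [hm.symm]
  obtain ⟨E, hEdef⟩ : ∃ E : ℝ → Submodule ℝ z, ∀ c,
      E c = ⨆ c' ∈ Set.Ici c, LinearMap.ker (T - c' • (LinearMap.id : z →ₗ[ℝ] z)) :=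
    ⟨_, fun _ => rfl⟩
  have key : ∀ (f : Fin m → ℝ) (X : Fin m → z), Orthonormal ℝ X →
      (∀ i, T (X i) = f i • X i) →
      ∀ c, Module.finrank ℝ (E c)
        = (Finset.univ.filter (fun j => c ≤ f j)).card := by
    intro f X hX hTX c
    obtain ⟨b, hb⟩ : ∃ b : Module.Basis (Fin m) ℝ z, ⇑b = X :=
      ⟨basisOfLinearIndependentOfCardEqFinrank hX.linearIndependent hcard,
        coe_basisOfLinearIndependentOfCardEqFinrank _ _⟩
    have hTb : ∀ i, T (b i) = f i • b i := by rw [hb]; exact hTX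
    have hEc : E c
        = Submodule.span ℝ (X '' ↑(Finset.univ.filter (fun j => c ≤ f j))) := by
      rw [hEdef c]
      apply le_antisymm
      · refine iSup₂_le fun c' hc' => ?_
        rw [aux_ker_eq_span b T f hTb c', hb]
        refine Submodule.span_mono (Set.image_mono ?_)
        intro i hi
        rw [Set.mem_setOf_eq] at hi
        simp only [Finset.coe_filter, Finset.mem_univ, true_and, Set.mem_setOf_eq]
        rw [hi]; exact hc'
      · rw [Submodule.span_le]
        rintro x ⟨i, hi, rfl⟩
        simp only [Finset.coe_filter, Finset.mem_univ, true_and, Set.mem_setOf_eq] at hi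
        refine Submodule.mem_iSup_of_mem (f i) ?_
        refine Submodule.mem_iSup_of_mem hi ?_
        rw [aux_ker_eq_span b T f hTb (f i), hb]
        exact Submodule.subset_span ⟨i, rfl, rfl⟩
    rw [hEc, aux_finrank_span hX.linearIndependent]
  have hcounts : ∀ c, (Finset.univ.filter (fun j => c ≤ lam j)).card
      = (Finset.univ.filter (fun j => c ≤ mu j)).card := by
    intro c
    rw [← key lam Z hZ hTZ c, ← key mu Y hY hTY c]
  funext i
  have h1 : lam i ≤ mu i := by
    have : (i : ℕ) < (Finset.univ.filter (fun j => lam i ≤ lam j)).card :=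
      (aux_mem_iff_lt_card hlam (lam i) i).1 le_rfl
    rw [hcounts] at this
    exact (aux_mem_iff_lt_card hmu (lam i) i).2 this
  have h2 : mu i ≤ lam i := by
    have : (i : ℕ) < (Finset.univ.filter (fun j => mu i ≤ mu j)).card :=
      (aux_mem_iff_lt_card hmu (mu i) i).1 le_rfl
    rw [← hcounts] at this
    exact (aux_mem_iff_lt_card hlam (mu i) i).2 this
  exact le_antisymm h1 h2

end Aux

/-- Generalized Kähler angle: existence of a diagonalizing orthonormal basis and
uniqueness of the ordered tuple of Kähler angles. -/
theorem stmt_5 {v z : Type*}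
    [NormedAddCommGroup v] [InnerProductSpace ℝ v] [FiniteDimensional ℝ v]
    [NormedAddCommGroup z] [InnerProductSpace ℝ z] [FiniteDimensional ℝ z]
    (J : z →ₗ[ℝ] v →ₗ[ℝ] v)
    (hskew : ∀ (Z : z) (U V : v), ⟪J Z U, V⟫ = -⟪U, J Z V⟫)
    (hsq : ∀ (Z : z) (U : v), J Z (J Z U) = -(⟪Z, Z⟫ : ℝ) • U)
    (W : Submodule ℝ v) (ξ : v) (hξW : ξ ∈ W) (hξ : ξ ≠ 0)
    (m : ℕ) (hm : m = Module.finrank ℝ z) :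
    ∃! φ : Fin m → ℝ,
      Monotone φ ∧ (∀ i, 0 ≤ φ i ∧ φ i ≤ Real.pi / 2) ∧
      ∃ Z : Fin m → z, Orthonormal ℝ Z ∧
        (∀ i, ‖((Submodule.orthogonalProjection W) (J (Z i) ξ) : v)‖ ^ 2
            = Real.cos (φ i) ^ 2 * ‖ξ‖ ^ 2) ∧
        (∀ i j, i ≠ j →
          (⟪((Submodule.orthogonalProjection W) (J (Z i) ξ) : v),
            ((Submodule.orthogonalProjection W) (J (Z j) ξ) : v)⟫ : ℝ) = 0) := by
  classical
  have hneg : -(Real.pi / 2) ≤ (0:ℝ) := by linarith [Real.pi_pos]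
  -- the linear map `A Z = P_W (J Z ξ)`
  set A : z →ₗ[ℝ] v :=
    { toFun := fun Z => ((Submodule.orthogonalProjection W) (J Z ξ) : v)
      map_add' := by intro Z₁ Z₂; simp
      map_smul' := by intro c Z; simp } with hA
  have hAapp : ∀ Z : z, A Z = ((Submodule.orthogonalProjection W) (J Z ξ) : v) := fun _ => rfl
  -- the symmetric operator `T = A* A`
  set T : z →ₗ[ℝ] z := (LinearMap.adjoint A) ∘ₗ A with hT
  have hTinner : ∀ Z₁ Z₂ : z, ⟪T Z₁, Z₂⟫ = ⟪A Z₁, A Z₂⟫ := by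
    intro Z₁ Z₂
    rw [hT]
    simp only [LinearMap.comp_apply]
    rw [LinearMap.adjoint_inner_left]
  have hTsymm : T.IsSymmetric := by
    intro x y
    rw [hTinner, real_inner_comm, ← hTinner]
    exact real_inner_comm _ _
  have hnξ : (0:ℝ) < ‖ξ‖ ^ 2 := pow_pos (norm_pos_iff.2 hξ) 2
  -- norm of J Z ξ
  have hJnorm : ∀ Z : z, ‖J Z ξ‖ ^ 2 = ‖Z‖ ^ 2 * ‖ξ‖ ^ 2 := by
    intro Z
    have h0 : ⟪J Z ξ, J Z ξ⟫ = -⟪ξ, J Z (J Z ξ)⟫ := hskew Z ξ (J Z ξ)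
    rw [hsq Z ξ] at h0
    rw [← real_inner_self_eq_norm_sq, h0, inner_smul_right]
    rw [real_inner_self_eq_norm_sq, real_inner_self_eq_norm_sq]
    ring
  -- bound on A
  have hAle : ∀ Z : z, ‖A Z‖ ^ 2 ≤ ‖Z‖ ^ 2 * ‖ξ‖ ^ 2 := by
    intro Z
    rw [← hJnorm Z, hAapp]
    have h1 : ‖((Submodule.orthogonalProjection W) (J Z ξ) : v)‖ ≤ ‖J Z ξ‖ := by
      rw [Submodule.norm_coe]
      calc ‖(Submodule.orthogonalProjection W) (J Z ξ)‖
          ≤ ‖(Submodule.orthogonalProjection W : v →L[ℝ] W)‖ * ‖J Z ξ‖ :=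
            ContinuousLinearMap.le_opNorm _ _
        _ ≤ 1 * ‖J Z ξ‖ := by
            gcongr
            exact Submodule.orthogonalProjectionOnto_norm_le W
        _ = ‖J Z ξ‖ := one_mul _
    exact pow_le_pow_left₀ (norm_nonneg _) h1 2
  -- the property, for a candidate tuple φ
  set P : (Fin m → ℝ) → Prop := fun φ =>
      Monotone φ ∧ (∀ i, 0 ≤ φ i ∧ φ i ≤ Real.pi / 2) ∧
      ∃ Z : Fin m → z, Orthonormal ℝ Z ∧
        (∀ i, ‖((Submodule.orthogonalProjection W) (J (Z i) ξ) : v)‖ ^ 2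
            = Real.cos (φ i) ^ 2 * ‖ξ‖ ^ 2) ∧
        (∀ i j, i ≠ j →
          (⟪((Submodule.orthogonalProjection W) (J (Z i) ξ) : v),
            ((Submodule.orthogonalProjection W) (J (Z j) ξ) : v)⟫ : ℝ) = 0) with hP
  have hcard : Fintype.card (Fin m) = Module.finrank ℝ z := by simp [hm.symm]
  -- any candidate gives eigen-data for T
  have hcand : ∀ φ : Fin m → ℝ, P φ → ∃ Z : Fin m → z, Orthonormal ℝ Z ∧
      (∀ i, T (Z i) = (Real.cos (φ i) ^ 2 * ‖ξ‖ ^ 2) • Z i) ∧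
      Antitone (fun i => Real.cos (φ i) ^ 2 * ‖ξ‖ ^ 2) := by
    intro φ hφ
    obtain ⟨hmono, hbound, Z, hZon, hZnorm, hZorth⟩ := hφ
    refine ⟨Z, hZon, ?_, ?_⟩
    · intro i
      rcases Nat.eq_zero_or_pos m with hm0 | hm0
      · exact absurd i.2 (by omega)
      have : Nonempty (Fin m) := ⟨⟨0, hm0⟩⟩
      obtain ⟨b, hbcoe⟩ : ∃ b : Module.Basis (Fin m) ℝ z, ⇑b = Z :=
        ⟨basisOfLinearIndependentOfCardEqFinrank hZon.linearIndependent hcard,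
          coe_basisOfLinearIndependentOfCardEqFinrank _ _⟩
      have hspan : Submodule.span ℝ (Set.range Z) = ⊤ := by
        rw [← hbcoe]; exact b.span_eq
      -- the vector T (Z i) - c • Z i is orthogonal to all Z j
      set x : z := T (Z i) - (Real.cos (φ i) ^ 2 * ‖ξ‖ ^ 2) • Z i with hx
      have hxj : ∀ j, ⟪x, Z j⟫ = 0 := by
        intro j
        rw [hx, inner_sub_left, inner_smul_left, hTinner]
        by_cases hij : i = j
        · subst hij
          have h1 : ⟪A (Z i), A (Z i)⟫ = Real.cos (φ i) ^ 2 * ‖ξ‖ ^ 2 := by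
            rw [real_inner_self_eq_norm_sq, hAapp]
            exact hZnorm i
          have h2 : ⟪Z i, Z i⟫ = (1:ℝ) := by
            rw [real_inner_self_eq_norm_sq, hZon.1 i]; norm_num
          rw [h1, h2]
          simp
        · have h1 : ⟪A (Z i), A (Z j)⟫ = 0 := by
            rw [hAapp, hAapp]; exact hZorth i j hij
          have h2 : ⟪Z i, Z j⟫ = (0:ℝ) := hZon.2 hij
          rw [h1, h2]
          simp
      have hall : ∀ u ∈ Submodule.span ℝ (Set.range Z), ⟪u, x⟫ = 0 := by
        intro u hu
        induction hu using Submodule.span_induction with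
        | mem u hu => obtain ⟨j, rfl⟩ := hu; rw [real_inner_comm]; exact hxj j
        | zero => simp
        | add u w _ _ hu hw => rw [inner_add_left, hu, hw, add_zero]
        | smul c u _ hu => rw [real_inner_smul_left, hu, mul_zero]
      have hxmem : x ∈ (Submodule.span ℝ (Set.range Z))ᗮ := by
        rw [Submodule.mem_orthogonal']
        intro u hu
        rw [real_inner_comm]
        exact hall u hu
      rw [hspan, Submodule.top_orthogonal_eq_bot, Submodule.mem_bot] at hxmem
      rw [hx] at hxmem
      exact sub_eq_zero.1 hxmem
    · intro i j hij
      have hci : 0 ≤ Real.cos (φ j) := Real.cos_nonneg_of_mem_Icc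
        ⟨le_trans hneg (hbound j).1, (hbound j).2⟩
      have hle : Real.cos (φ j) ≤ Real.cos (φ i) := by
        apply Real.cos_le_cos_of_nonneg_of_le_pi (hbound i).1
        · exact le_trans (hbound j).2 (by linarith [Real.pi_pos])
        · exact hmono hij
      have hsq2 : Real.cos (φ j) ^ 2 ≤ Real.cos (φ i) ^ 2 := pow_le_pow_left₀ hci hle 2
      show Real.cos (φ j) ^ 2 * ‖ξ‖ ^ 2 ≤ Real.cos (φ i) ^ 2 * ‖ξ‖ ^ 2
      nlinarith
  -- Existence
  have hfr : Module.finrank ℝ z = m := hm.symm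
  obtain ⟨B, lam, hTB⟩ : ∃ (B : OrthonormalBasis (Fin m) ℝ z) (lam : Fin m → ℝ),
      ∀ i, T (B i) = lam i • B i := by
    refine ⟨hTsymm.eigenvectorBasis hfr, hTsymm.eigenvalues hfr, fun i => ?_⟩
    simpa using hTsymm.apply_eigenvectorBasis hfr i
  have hBnorm : ∀ i, ⟪B i, B i⟫ = (1:ℝ) := by
    intro i
    rw [real_inner_self_eq_norm_sq, B.orthonormal.1 i]; norm_num
  have hlam_eq : ∀ i, lam i = ‖A (B i)‖ ^ 2 := by
    intro i
    have h1 : ⟪T (B i), B i⟫ = lam i := by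
      rw [hTB i, inner_smul_left, hBnorm i]; simp
    rw [← h1, hTinner, real_inner_self_eq_norm_sq]
  have hlam_nonneg : ∀ i, 0 ≤ lam i := fun i => by rw [hlam_eq i]; positivity
  have hlam_le : ∀ i, lam i ≤ ‖ξ‖ ^ 2 := by
    intro i
    rw [hlam_eq i]
    have h2 := hAle (B i)
    rw [B.orthonormal.1 i] at h2
    simpa using h2
  -- sort the eigenvalues in decreasing order
  set σ : Equiv.Perm (Fin m) := Tuple.sort (fun i => -(lam i)) with hσ
  have hanti : Antitone (fun i => lam (σ i)) := by
    have hmono := Tuple.monotone_sort (fun i => -(lam i))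
    intro i j hij
    have := hmono hij
    simp only [Function.comp_apply] at this
    simp only [hσ] at this ⊢
    linarith
  set φ0 : Fin m → ℝ := fun i => Real.arccos (Real.sqrt (lam (σ i) / ‖ξ‖ ^ 2)) with hφ0
  have harg_nonneg : ∀ i, 0 ≤ lam (σ i) / ‖ξ‖ ^ 2 := fun i =>
    div_nonneg (hlam_nonneg _) hnξ.le
  have harg_le_one : ∀ i, lam (σ i) / ‖ξ‖ ^ 2 ≤ 1 := fun i =>
    (div_le_one hnξ).2 (hlam_le _)
  have hsqrt_le_one : ∀ i, Real.sqrt (lam (σ i) / ‖ξ‖ ^ 2) ≤ 1 := fun i => by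
    rw [show (1:ℝ) = Real.sqrt 1 by simp]
    exact Real.sqrt_le_sqrt (harg_le_one i)
  have hcos0 : ∀ i, Real.cos (φ0 i) = Real.sqrt (lam (σ i) / ‖ξ‖ ^ 2) := fun i =>
    Real.cos_arccos (le_trans (by norm_num) (Real.sqrt_nonneg _)) (hsqrt_le_one i)
  have hcos0sq : ∀ i, Real.cos (φ0 i) ^ 2 * ‖ξ‖ ^ 2 = lam (σ i) := by
    intro i
    rw [hcos0 i, Real.sq_sqrt (harg_nonneg i), div_mul_cancel₀ _ hnξ.ne']
  have hφ0mono : Monotone φ0 := by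
    intro i j hij
    rw [hφ0]
    simp only
    rw [Real.arccos_eq_pi_div_two_sub_arcsin, Real.arccos_eq_pi_div_two_sub_arcsin]
    have h1 : Real.sqrt (lam (σ j) / ‖ξ‖ ^ 2) ≤ Real.sqrt (lam (σ i) / ‖ξ‖ ^ 2) := by
      apply Real.sqrt_le_sqrt
      gcongr
      exact hanti hij
    have h2 := Real.monotone_arcsin h1
    linarith
  have hφ0P : P φ0 := by
    refine ⟨hφ0mono, fun i => ⟨Real.arccos_nonneg _, Real.arccos_le_pi_div_two.2
      (Real.sqrt_nonneg _)⟩, fun i => B (σ i), B.orthonormal.comp ⇑σ σ.injective, ?_, ?_⟩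
    · intro i
      have h1 : ‖((Submodule.orthogonalProjection W) (J (B (σ i)) ξ) : v)‖ ^ 2
          = ⟪T (B (σ i)), B (σ i)⟫ := by
        rw [hTinner, real_inner_self_eq_norm_sq, hAapp]
      rw [h1, hTB, inner_smul_left, hBnorm (σ i), hcos0sq i]
      simp
    · intro i j hij
      have h1 : (⟪((Submodule.orthogonalProjection W) (J (B (σ i)) ξ) : v),
          ((Submodule.orthogonalProjection W) (J (B (σ j)) ξ) : v)⟫ : ℝ) = ⟪T (B (σ i)), B (σ j)⟫ := by
        rw [hTinner, hAapp, hAapp]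
      rw [h1, hTB, inner_smul_left]
      have h2 : ⟪B (σ i), B (σ j)⟫ = (0:ℝ) := B.orthonormal.2 (fun h => hij (σ.injective h))
      rw [h2]; simp
  refine ⟨φ0, hφ0P, ?_⟩
  -- Uniqueness
  intro ψ hψP
  obtain ⟨Zψ, hZψon, hTZψ, hψanti⟩ := hcand ψ hψP
  obtain ⟨Zφ, hZφon, hTZφ, hφanti⟩ := hcand φ0 hφ0P
  have htuple : (fun i => Real.cos (ψ i) ^ 2 * ‖ξ‖ ^ 2)
      = (fun i => Real.cos (φ0 i) ^ 2 * ‖ξ‖ ^ 2) :=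
    aux_eigen_unique hm T hZψon hZφon hTZψ hTZφ hψanti hφanti
  funext i
  have hi := congrFun htuple i
  have hsq_eq : Real.cos (ψ i) ^ 2 = Real.cos (φ0 i) ^ 2 := mul_right_cancel₀ hnξ.ne' hi
  obtain ⟨hψ0, hψπ⟩ := hψP.2.1 i
  obtain ⟨hφ00, hφ0π⟩ := hφ0P.2.1 i
  have hcψ : 0 ≤ Real.cos (ψ i) := Real.cos_nonneg_of_mem_Icc ⟨le_trans hneg hψ0, hψπ⟩
  have hcφ : 0 ≤ Real.cos (φ0 i) := Real.cos_nonneg_of_mem_Icc ⟨le_trans hneg hφ00, hφ0π⟩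
  have hcos_eq : Real.cos (ψ i) = Real.cos (φ0 i) := by
    have h1 : Real.cos (ψ i) = Real.sqrt (Real.cos (ψ i) ^ 2) := (Real.sqrt_sq hcψ).symm
    have h2 : Real.cos (φ0 i) = Real.sqrt (Real.cos (φ0 i) ^ 2) := (Real.sqrt_sq hcφ).symm
    rw [h1, h2, hsq_eq]
  have hπ2 : Real.pi / 2 ≤ Real.pi := by linarith [Real.pi_pos]
  exact Real.injOn_cos ⟨hψ0, le_trans hψπ hπ2⟩ ⟨hφ00, le_trans hφ0π hπ2⟩ hcos_eq
end

section
/- Let w⊥ be a linear subspace of Cⁿ (viewed as a real inner product space with complex structure J) and ξ ∈ w⊥ a unit vector whose Kähler angle φ satisfies 0 < φ < π/2, i.e., ‖Fξ‖ = cos φ where Fξ is the orthogonal projection of Jξ onto w⊥. Set F̄ξ = Fξ/‖Fξ‖. Then there exists a unique vector η in the orthogonal complement of the complex line Cξ such that F̄ξ = cos(φ)Jξ + sin(φ)Jη. -/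
open RealInnerProductSpace

/-- Berndt–Brück Lemma: if `ξ ∈ w⊥` is a unit vector with Kähler angle
`φ ∈ (0, π/2)`, then there is a unique `η` orthogonal to the complex line
`ℂξ = span{ξ, Jξ}` with `F̄ξ = cos(φ)Jξ + sin(φ)Jη`. Here `V` is `ℂⁿ`
regarded as a real inner product space with its complex structure `J`. -/
theorem stmt_9 {V : Type*}
    [NormedAddCommGroup V] [InnerProductSpace ℝ V] [FiniteDimensional ℝ V]
    (J : V →ₗ[ℝ] V)
    (hJorth : ∀ x y : V, (⟪J x, J y⟫ : ℝ) = ⟪x, y⟫)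
    (hJskew : ∀ x y : V, (⟪J x, y⟫ : ℝ) = -⟪x, J y⟫)
    (hJsq : ∀ x : V, J (J x) = -x)
    (W : Submodule ℝ V) (ξ : V) (hξW : ξ ∈ W) (hξ : ‖ξ‖ = 1)
    (Fξ : V) (hFξ : Fξ = ((Submodule.orthogonalProjection W) (J ξ) : V))
    (φ : ℝ) (hφ : 0 < φ ∧ φ < Real.pi / 2)
    (hcos : ‖Fξ‖ = Real.cos φ) :
    ∃! η : V, (⟪η, ξ⟫ : ℝ) = 0 ∧ (⟪η, J ξ⟫ : ℝ) = 0 ∧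
      ‖Fξ‖⁻¹ • Fξ = Real.cos φ • J ξ + Real.sin φ • J η := by
  obtain ⟨hφ1, hφ2⟩ := hφ
  have hpi := Real.pi_gt_three
  have hs : (0:ℝ) < Real.sin φ := Real.sin_pos_of_pos_of_lt_pi hφ1 (by linarith)
  have hc : (0:ℝ) < Real.cos φ := Real.cos_pos_of_mem_Ioo ⟨by linarith, hφ2⟩
  have hF : ‖Fξ‖ ≠ 0 := by rw [hcos]; exact ne_of_gt hc
  have hsne : Real.sin φ ≠ 0 := ne_of_gt hs
  set u : V := ‖Fξ‖⁻¹ • Fξ with hu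
  clear_value u
  have hFW : Fξ ∈ W := by rw [hFξ]; exact (Submodule.orthogonalProjection W (J ξ)).2
  have hperp : J ξ - Fξ ∈ Wᗮ := by
    rw [hFξ]; exact Submodule.sub_starProjection_mem_orthogonal (K := W) (J ξ)
  have h1 : (⟪Fξ, J ξ⟫ : ℝ) = ‖Fξ‖ ^ 2 := by
    have h0 : (⟪Fξ, J ξ - Fξ⟫ : ℝ) = 0 :=
      (Submodule.mem_orthogonal W _).1 hperp Fξ hFW
    rw [inner_sub_right] at h0
    rw [← real_inner_self_eq_norm_sq]
    linarith
  have h2 : (⟪Fξ, ξ⟫ : ℝ) = 0 := by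
    have h0 : (⟪ξ, J ξ - Fξ⟫ : ℝ) = 0 :=
      (Submodule.mem_orthogonal W _).1 hperp ξ hξW
    rw [inner_sub_right] at h0
    have h3 : (⟪ξ, J ξ⟫ : ℝ) = 0 := by
      have := hJskew ξ ξ
      have h4 : (⟪J ξ, ξ⟫ : ℝ) = ⟪ξ, J ξ⟫ := real_inner_comm _ _
      linarith
    rw [real_inner_comm]
    linarith
  -- the candidate
  set η : V := (Real.sin φ)⁻¹ • (-(J u) - Real.cos φ • ξ) with hη
  have hJη : J η = (Real.sin φ)⁻¹ • (u - Real.cos φ • J ξ) := by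
    rw [hη, map_smul, map_sub, map_neg, map_smul, hJsq, neg_neg]
  have heq : u = Real.cos φ • J ξ + Real.sin φ • J η := by
    rw [hJη, smul_smul, mul_inv_cancel₀ hsne, one_smul]
    abel
  refine ⟨η, ⟨?_, ?_, heq⟩, ?_⟩
  · -- ⟪η, ξ⟫ = 0
    rw [hη, inner_smul_left, inner_sub_left, inner_neg_left, inner_smul_left]
    have hJu : (⟪J u, ξ⟫ : ℝ) = -(Real.cos φ) := by
      rw [hu, map_smul, real_inner_smul_left, hJskew, h1, hcos]
      field_simp
    rw [hJu, real_inner_self_eq_norm_sq, hξ]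
    simp
  · -- ⟪η, J ξ⟫ = 0
    rw [hη, inner_smul_left, inner_sub_left, inner_neg_left, inner_smul_left]
    have hJu : (⟪J u, J ξ⟫ : ℝ) = 0 := by
      rw [hJorth, hu, inner_smul_left, h2]
      simp
    have h3 : (⟪ξ, J ξ⟫ : ℝ) = 0 := by
      have := hJskew ξ ξ
      have h4 : (⟪J ξ, ξ⟫ : ℝ) = ⟪ξ, J ξ⟫ := real_inner_comm _ _
      linarith
    rw [hJu, h3]
    simp
  · -- uniqueness
    rintro η' ⟨-, -, heq'⟩
    have hJinj : Function.Injective J := by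
      intro a b hab
      have := congrArg J hab
      rw [hJsq, hJsq] at this
      exact neg_injective this
    have : Real.sin φ • J η' = Real.sin φ • J η := by
      have := heq'.symm.trans heq
      exact add_left_cancel this
    have := smul_right_injective V hsne this
    exact hJinj this
end

section
/- Let α₁, α₂, α₃ ∈ R. There exists a basis of unit vectors {e₁, e₂, e₃} of R³ with ⟨e_i, e_{i+1}⟩ = α_{i+2} (indices mod 3) if and only if |α_i| < 1 for all i and α₁² + α₂² + α₃² < 1 + 2α₁α₂α₃. -/
open RealInnerProductSpace

/-- There is a basis of unit vectors `{e₁,e₂,e₃}` of `ℝ³` with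
`⟪e_i, e_{i+1}⟫ = α_{i+2}` (cyclic indices) iff `|α_i| < 1` for all `i` and
`α₁² + α₂² + α₃² < 1 + 2α₁α₂α₃`. -/
theorem stmt_12 (α : Fin 3 → ℝ) :
    (∃ e : Fin 3 → EuclideanSpace ℝ (Fin 3),
      LinearIndependent ℝ e ∧ (∀ i, ‖e i‖ = 1) ∧
      (∀ i : Fin 3, (⟪e i, e (i + 1)⟫ : ℝ) = α (i + 2))) ↔
    ((∀ i, |α i| < 1) ∧
      α 0 ^ 2 + α 1 ^ 2 + α 2 ^ 2 < 1 + 2 * α 0 * α 1 * α 2) := by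
  constructor
  · rintro ⟨e, hli, hn, hip⟩
    have h01 : (⟪e 0, e 1⟫ : ℝ) = α 2 := hip 0
    have h12 : (⟪e 1, e 2⟫ : ℝ) = α 0 := hip 1
    have h20 : (⟪e 2, e 0⟫ : ℝ) = α 1 := hip 2
    have hself : ∀ i, (⟪e i, e i⟫ : ℝ) = 1 := by
      intro i
      rw [real_inner_self_eq_norm_sq, hn i]; norm_num
    -- key positivity of the quadratic form
    have hQ : ∀ a b c : ℝ, ¬(a = 0 ∧ b = 0 ∧ c = 0) →
        0 < a^2 + b^2 + c^2 + 2*(α 2)*a*b + 2*(α 1)*a*c + 2*(α 0)*b*c := by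
      intro a b c habc
      set v : EuclideanSpace ℝ (Fin 3) := a • e 0 + b • e 1 + c • e 2 with hv
      have hvne : v ≠ 0 := by
        intro h0
        apply habc
        have := (Fintype.linearIndependent_iff.mp hli) ![a,b,c] ?_
        · exact ⟨this 0, this 1, this 2⟩
        · rw [Fin.sum_univ_three]
          simpa using h0
      have hpos : 0 < (⟪v, v⟫ : ℝ) := by
        rw [real_inner_self_eq_norm_sq]
        exact pow_pos (norm_pos_iff.mpr hvne) 2
      have h10 : (⟪e 1, e 0⟫ : ℝ) = α 2 := by rw [real_inner_comm]; exact h01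
      have h21 : (⟪e 2, e 1⟫ : ℝ) = α 0 := by rw [real_inner_comm]; exact h12
      have h02 : (⟪e 0, e 2⟫ : ℝ) = α 1 := by rw [real_inner_comm]; exact h20
      have hexp : (⟪v, v⟫ : ℝ) =
          a^2 + b^2 + c^2 + 2*(α 2)*a*b + 2*(α 1)*a*c + 2*(α 0)*b*c := by
        simp only [hv, inner_add_left, inner_add_right,
          real_inner_smul_left, real_inner_smul_right]
        rw [h01, h12, h20, h10, h21, h02, hself 0, hself 1, hself 2]
        ring
      linarith [hexp ▸ hpos]
    have h2 : |α 2| < 1 := by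
      have hp := hQ 1 1 0 (by norm_num)
      have hm := hQ 1 (-1) 0 (by norm_num)
      rw [abs_lt]; constructor <;> nlinarith
    have h1 : |α 1| < 1 := by
      have hp := hQ 1 0 1 (by norm_num)
      have hm := hQ 1 0 (-1) (by norm_num)
      rw [abs_lt]; constructor <;> nlinarith
    have h0 : |α 0| < 1 := by
      have hp := hQ 0 1 1 (by norm_num)
      have hm := hQ 0 1 (-1) (by norm_num)
      rw [abs_lt]; constructor <;> nlinarith
    refine ⟨fun i => by fin_cases i <;> assumption, ?_⟩
    have hs : 0 < 1 - α 2 ^ 2 := by nlinarith [abs_lt.mp h2]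
    have hd := hQ (α 2 * α 0 - α 1) (α 1 * α 2 - α 0) (1 - α 2 ^ 2)
      (by intro ⟨_, _, h⟩; linarith)
    nlinarith [hd, hs, sq_nonneg (α 0 - α 1 * α 2)]
  · rintro ⟨hlt, hdet⟩
    have h2 := abs_lt.mp (hlt 2)
    have hs2 : 0 < 1 - α 2 ^ 2 := by nlinarith
    obtain ⟨s, hspos, hssq⟩ : ∃ s : ℝ, 0 < s ∧ s ^ 2 = 1 - α 2 ^ 2 :=
      ⟨Real.sqrt (1 - α 2 ^ 2), Real.sqrt_pos.mpr hs2, Real.sq_sqrt hs2.le⟩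
    have hdpos : 0 < 1 + 2 * α 0 * α 1 * α 2 - (α 0 ^ 2 + α 1 ^ 2 + α 2 ^ 2) := by
      linarith
    obtain ⟨t, htpos, htsq⟩ : ∃ t : ℝ, 0 < t ∧
        t ^ 2 * (1 - α 2 ^ 2) = 1 + 2 * α 0 * α 1 * α 2 - (α 0 ^ 2 + α 1 ^ 2 + α 2 ^ 2) := by
      refine ⟨Real.sqrt (1 + 2 * α 0 * α 1 * α 2 - (α 0 ^ 2 + α 1 ^ 2 + α 2 ^ 2)) / s,
        div_pos (Real.sqrt_pos.mpr hdpos) hspos, ?_⟩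
      rw [div_pow, Real.sq_sqrt hdpos.le, hssq, div_mul_cancel₀]
      exact hs2.ne'
    refine ⟨![(WithLp.equiv 2 (Fin 3 → ℝ)).symm ![1, 0, 0],
        (WithLp.equiv 2 (Fin 3 → ℝ)).symm ![α 2, s, 0],
        (WithLp.equiv 2 (Fin 3 → ℝ)).symm ![α 1, (α 0 - α 1 * α 2) / s, t]], ?_, ?_, ?_⟩
    · rw [Fintype.linearIndependent_iff]
      intro g hg
      have hfun : ∀ j : Fin 3, (∑ i : Fin 3, g i •
          (![(WithLp.equiv 2 (Fin 3 → ℝ)).symm ![1, 0, 0],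
            (WithLp.equiv 2 (Fin 3 → ℝ)).symm ![α 2, s, 0],
            (WithLp.equiv 2 (Fin 3 → ℝ)).symm ![α 1, (α 0 - α 1 * α 2) / s, t]] :
              Fin 3 → EuclideanSpace ℝ (Fin 3)) i) j = 0 := fun j => by rw [hg]; rfl
      have e2 := hfun 2
      have e1 := hfun 1
      have e0 := hfun 0
      simp [Fin.sum_univ_three, WithLp.equiv_symm_apply, PiLp.toLp_apply] at e0 e1 e2
      have hg2 : g 2 = 0 := by
        rcases e2 with h | h
        · exact h
        · exact absurd h htpos.ne'
      have hg1 : g 1 = 0 := by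
        rw [hg2] at e1; simp at e1
        rcases e1 with h | h
        · exact h
        · exact absurd h hspos.ne'
      have hg0 : g 0 = 0 := by
        rw [hg1, hg2] at e0; simpa using e0
      intro i; fin_cases i <;> assumption
    · intro i
      fin_cases i
      · show ‖((WithLp.equiv 2 (Fin 3 → ℝ)).symm ![1,0,0] : EuclideanSpace ℝ (Fin 3))‖ = 1
        rw [EuclideanSpace.norm_eq]
        simp [Fin.sum_univ_three, WithLp.equiv_symm_apply, PiLp.toLp_apply]
      · show ‖((WithLp.equiv 2 (Fin 3 → ℝ)).symm ![α 2, s, 0] : EuclideanSpace ℝ (Fin 3))‖ = 1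
        rw [EuclideanSpace.norm_eq]
        simp [Fin.sum_univ_three, WithLp.equiv_symm_apply, PiLp.toLp_apply]
        nlinarith [hssq]
      · show ‖((WithLp.equiv 2 (Fin 3 → ℝ)).symm ![α 1, (α 0 - α 1 * α 2) / s, t] :
            EuclideanSpace ℝ (Fin 3))‖ = 1
        rw [EuclideanSpace.norm_eq]
        simp [Fin.sum_univ_three, WithLp.equiv_symm_apply, PiLp.toLp_apply]
        field_simp
        nlinarith [hssq, htsq, hs2, sq_nonneg s]
    · intro i
      fin_cases i
      · show (⟪((WithLp.equiv 2 (Fin 3 → ℝ)).symm ![1,0,0] : EuclideanSpace ℝ (Fin 3)),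
          (WithLp.equiv 2 (Fin 3 → ℝ)).symm ![α 2, s, 0]⟫ : ℝ) = α 2
        simp [PiLp.inner_apply, Fin.sum_univ_three, WithLp.equiv_symm_apply, PiLp.toLp_apply]
      · show (⟪((WithLp.equiv 2 (Fin 3 → ℝ)).symm ![α 2, s, 0] : EuclideanSpace ℝ (Fin 3)),
          (WithLp.equiv 2 (Fin 3 → ℝ)).symm ![α 1, (α 0 - α 1 * α 2) / s, t]⟫ : ℝ) = α 0
        simp [PiLp.inner_apply, Fin.sum_univ_three, WithLp.equiv_symm_apply, PiLp.toLp_apply]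
        field_simp
        ring
      · show (⟪((WithLp.equiv 2 (Fin 3 → ℝ)).symm ![α 1, (α 0 - α 1 * α 2) / s, t] :
            EuclideanSpace ℝ (Fin 3)),
          (WithLp.equiv 2 (Fin 3 → ℝ)).symm ![1,0,0]⟫ : ℝ) = α 1
        simp [PiLp.inner_apply, Fin.sum_univ_three, WithLp.equiv_symm_apply, PiLp.toLp_apply]
end

section
/- Let 0 < φ₁ ≤ φ₂ ≤ φ₃ ≤ π/2. There exists a basis of unit vectors {e₁, e₂, e₃} of R³ with ⟨e_i, e_{i+1}⟩ = (cos φ_{i+2} - cos φ_i cos φ_{i+1})/(sin φ_i sin φ_{i+1}) for each cyclic permutation (i,i+1,i+2) of (1,2,3), if and only if cos φ₁ + cos φ₂ < 1 + cos φ₃. -/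
set_option maxHeartbeats 1000000
open RealInnerProductSpace Real

private lemma expand3 {E : Type*} [NormedAddCommGroup E] [InnerProductSpace ℝ E]
    (e : Fin 3 → E) (c0 c1 c2 : ℝ) :
    (⟪c0 • e 0 + c1 • e 1 + c2 • e 2, c0 • e 0 + c1 • e 1 + c2 • e 2⟫ : ℝ) =
      c0^2 * ⟪e 0, e 0⟫ + c1^2 * ⟪e 1, e 1⟫ + c2^2 * ⟪e 2, e 2⟫
      + 2*c0*c1 * ⟪e 0, e 1⟫ + 2*c1*c2 * ⟪e 1, e 2⟫ + 2*c0*c2 * ⟪e 2, e 0⟫ := by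
  simp only [inner_add_left, inner_add_right, real_inner_smul_left, real_inner_smul_right,
    real_inner_comm (e 1) (e 0), real_inner_comm (e 2) (e 0), real_inner_comm (e 2) (e 1)]
  ring

private lemma keyD (u v w sa sb sc : ℝ)
    (hsa : sa^2 = 1 - u^2) (hsb : sb^2 = 1 - v^2) (hsc : sc^2 = 1 - w^2)
    (hA : (1:ℝ) - u^2 ≠ 0) (hB : (1:ℝ) - v^2 ≠ 0) (hC : (1:ℝ) - w^2 ≠ 0) :
    (1 - ((w-u*v)/(sa*sb))^2 - ((u-v*w)/(sb*sc))^2 - ((v-w*u)/(sc*sa))^2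
      + 2*((w-u*v)/(sa*sb))*((u-v*w)/(sb*sc))*((v-w*u)/(sc*sa)))
      * ((1-u^2)*(1-v^2)*(1-w^2))
    = (1+u+v+w)*(1+u-v-w)*(1-u+v-w)*(1+w-u-v) := by
  have e1 : ((w-u*v)/(sa*sb))^2 = (w-u*v)^2/((1-u^2)*(1-v^2)) := by
    rw [div_pow, mul_pow, hsa, hsb]
  have e2 : ((u-v*w)/(sb*sc))^2 = (u-v*w)^2/((1-v^2)*(1-w^2)) := by
    rw [div_pow, mul_pow, hsb, hsc]
  have e3 : ((v-w*u)/(sc*sa))^2 = (v-w*u)^2/((1-w^2)*(1-u^2)) := by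
    rw [div_pow, mul_pow, hsc, hsa]
  have e4 : ((w-u*v)/(sa*sb))*((u-v*w)/(sb*sc))*((v-w*u)/(sc*sa))
      = ((w-u*v)*(u-v*w)*(v-w*u))/((1-u^2)*((1-v^2)*(1-w^2))) := by
    rw [div_mul_div_comm, div_mul_div_comm]
    congr 1
    have : sa*sb*(sb*sc)*(sc*sa) = sa^2*(sb^2*sc^2) := by ring
    rw [this, hsa, hsb, hsc]
  rw [e1, e2, e3, show 2*((w-u*v)/(sa*sb))*((u-v*w)/(sb*sc))*((v-w*u)/(sc*sa))
      = 2*(((w-u*v)/(sa*sb))*((u-v*w)/(sb*sc))*((v-w*u)/(sc*sa))) from by ring, e4]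
  field_simp
  ring

private lemma deltaPos (u v w : ℝ) (hu1 : u < 1) (hvu : v ≤ u) (hwv : w ≤ v)
    (hw0 : 0 ≤ w) (hlt : u + v < 1 + w) :
    0 < (1 - u^2) * (1 - v^2) - (w - u*v)^2 := by
  nlinarith [sq_nonneg (w - u*v), mul_pos (sub_pos.mpr hu1) (sub_pos.mpr (lt_of_le_of_lt hvu hu1)),
    mul_nonneg (sub_nonneg.mpr hwv) hw0,
    mul_pos (sub_pos.mpr hu1) (show (0:ℝ) < 1 + v - 2*v^2 by nlinarith),
    sq_nonneg (w - u*v + (1-u)*(1-v)),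
    mul_nonneg (mul_nonneg (sub_nonneg.mpr hu1.le) (sub_nonneg.mpr hwv)) (sub_nonneg.mpr hvu)]

/-- For `0 < φ₁ ≤ φ₂ ≤ φ₃ ≤ π/2`, a basis of unit vectors of `ℝ³` with the
inner products `⟪e_i, e_{i+1}⟫ = (cos φ_{i+2} - cos φ_i cos φ_{i+1})/(sin φ_i sin φ_{i+1})`
exists iff `cos φ₁ + cos φ₂ < 1 + cos φ₃`. -/
theorem stmt_13 (φ : Fin 3 → ℝ)
    (h0 : 0 < φ 0) (h01 : φ 0 ≤ φ 1) (h12 : φ 1 ≤ φ 2) (h2 : φ 2 ≤ π / 2) :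
    (∃ e : Fin 3 → EuclideanSpace ℝ (Fin 3),
      LinearIndependent ℝ e ∧ (∀ i, ‖e i‖ = 1) ∧
      (∀ i : Fin 3, (⟪e i, e (i + 1)⟫ : ℝ)
        = (Real.cos (φ (i + 2)) - Real.cos (φ i) * Real.cos (φ (i + 1)))
          / (Real.sin (φ i) * Real.sin (φ (i + 1))))) ↔
    Real.cos (φ 0) + Real.cos (φ 1) < 1 + Real.cos (φ 2) := by
  have hpi := Real.pi_pos
  have hφ1 : 0 < φ 1 := lt_of_lt_of_le h0 h01
  have hφ2 : 0 < φ 2 := lt_of_lt_of_le hφ1 h12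
  have hs0 : 0 < Real.sin (φ 0) := Real.sin_pos_of_pos_of_lt_pi h0 (by linarith)
  have hs1 : 0 < Real.sin (φ 1) := Real.sin_pos_of_pos_of_lt_pi hφ1 (by linarith)
  have hs2 : 0 < Real.sin (φ 2) := Real.sin_pos_of_pos_of_lt_pi hφ2 (by linarith)
  have hu1 : Real.cos (φ 0) < 1 := by
    have := Real.cos_lt_cos_of_nonneg_of_le_pi (le_refl (0:ℝ)) (by linarith : φ 0 ≤ π) h0
    simpa using this
  have hvu : Real.cos (φ 1) ≤ Real.cos (φ 0) :=
    Real.cos_le_cos_of_nonneg_of_le_pi h0.le (by linarith) h01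
  have hwv : Real.cos (φ 2) ≤ Real.cos (φ 1) :=
    Real.cos_le_cos_of_nonneg_of_le_pi hφ1.le (by linarith) h12
  have hw0 : (0:ℝ) ≤ Real.cos (φ 2) := Real.cos_nonneg_of_mem_Icc ⟨by linarith, h2⟩
  have hv0 : (0:ℝ) ≤ Real.cos (φ 1) := le_trans hw0 hwv
  have hu0 : (0:ℝ) ≤ Real.cos (φ 0) := le_trans hv0 hvu
  have hv1 : Real.cos (φ 1) < 1 := lt_of_le_of_lt hvu hu1
  have hw1 : Real.cos (φ 2) < 1 := lt_of_le_of_lt hwv hv1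
  have hA' : (0:ℝ) < 1 - Real.cos (φ 0) ^ 2 := by nlinarith
  have hB' : (0:ℝ) < 1 - Real.cos (φ 1) ^ 2 := by nlinarith
  have hC' : (0:ℝ) < 1 - Real.cos (φ 2) ^ 2 := by nlinarith
  have hsa : Real.sin (φ 0) ^ 2 = 1 - Real.cos (φ 0) ^ 2 := Real.sin_sq (φ 0)
  have hsb : Real.sin (φ 1) ^ 2 = 1 - Real.cos (φ 1) ^ 2 := Real.sin_sq (φ 1)
  have hsc : Real.sin (φ 2) ^ 2 = 1 - Real.cos (φ 2) ^ 2 := Real.sin_sq (φ 2)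
  have hA : (1:ℝ) - Real.cos (φ 0) ^ 2 ≠ 0 := ne_of_gt hA'
  have hB : (1:ℝ) - Real.cos (φ 1) ^ 2 ≠ 0 := ne_of_gt hB'
  have hC : (1:ℝ) - Real.cos (φ 2) ^ 2 ≠ 0 := ne_of_gt hC'
  have key := keyD (Real.cos (φ 0)) (Real.cos (φ 1)) (Real.cos (φ 2))
    (Real.sin (φ 0)) (Real.sin (φ 1)) (Real.sin (φ 2)) hsa hsb hsc hA hB hC
  obtain ⟨g01, hg01⟩ : ∃ x : ℝ, x = (Real.cos (φ 2) - Real.cos (φ 0) * Real.cos (φ 1))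
      / (Real.sin (φ 0) * Real.sin (φ 1)) := ⟨_, rfl⟩
  obtain ⟨g12, hg12⟩ : ∃ x : ℝ, x = (Real.cos (φ 0) - Real.cos (φ 1) * Real.cos (φ 2))
      / (Real.sin (φ 1) * Real.sin (φ 2)) := ⟨_, rfl⟩
  obtain ⟨g20, hg20⟩ : ∃ x : ℝ, x = (Real.cos (φ 1) - Real.cos (φ 2) * Real.cos (φ 0))
      / (Real.sin (φ 2) * Real.sin (φ 0)) := ⟨_, rfl⟩
  rw [← hg01, ← hg12, ← hg20] at key
  have hPpos : 0 < (1 - Real.cos (φ 0)^2) * (1 - Real.cos (φ 1)^2) * (1 - Real.cos (φ 2)^2) :=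
    mul_pos (mul_pos hA' hB') hC'
  have hF1 : 0 < 1 + Real.cos (φ 0) + Real.cos (φ 1) + Real.cos (φ 2) := by linarith
  have hF2 : 0 < 1 + Real.cos (φ 0) - Real.cos (φ 1) - Real.cos (φ 2) := by linarith
  have hF3 : 0 < 1 - Real.cos (φ 0) + Real.cos (φ 1) - Real.cos (φ 2) := by linarith
  -- the "1 - g01^2" identity
  have hpid : (1 - g01^2) * ((1 - Real.cos (φ 0)^2) * (1 - Real.cos (φ 1)^2))
      = (1 - Real.cos (φ 0)^2) * (1 - Real.cos (φ 1)^2)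
        - (Real.cos (φ 2) - Real.cos (φ 0) * Real.cos (φ 1))^2 := by
    rw [hg01, div_pow, mul_pow, hsa, hsb]
    field_simp
  constructor
  · rintro ⟨e, hLI, hnorm, hip⟩
    have hii : ∀ i, (⟪e i, e i⟫ : ℝ) = 1 := fun i => by
      rw [real_inner_self_eq_norm_sq, hnorm]; norm_num
    have h1 : (⟪e 0, e 1⟫ : ℝ) = g01 := by
      have := hip 0; norm_num at this; rw [hg01]; exact this
    have h2 : (⟪e 1, e 2⟫ : ℝ) = g12 := by
      have := hip 1; norm_num at this; rw [hg12]; exact this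
    have h3 : (⟪e 2, e 0⟫ : ℝ) = g20 := by
      have := hip 2; norm_num at this; rw [hg20]; exact this
    have hpos : ∀ c0 c1 c2 : ℝ, (c0 ≠ 0 ∨ c1 ≠ 0 ∨ c2 ≠ 0) →
        0 < (⟪c0 • e 0 + c1 • e 1 + c2 • e 2, c0 • e 0 + c1 • e 1 + c2 • e 2⟫ : ℝ) := by
      intro c0 c1 c2 hc
      have hx : c0 • e 0 + c1 • e 1 + c2 • e 2 ≠ 0 := by
        intro hz
        have hall := Fintype.linearIndependent_iff.mp hLI ![c0, c1, c2]
          (by rw [Fin.sum_univ_three]; simpa using hz)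
        have e0' : c0 = 0 := by simpa using hall 0
        have e1' : c1 = 0 := by simpa using hall 1
        have e2' : c2 = 0 := by simpa using hall 2
        rcases hc with h | h | h
        exacts [h e0', h e1', h e2']
      rw [real_inner_self_eq_norm_sq]
      exact pow_pos (norm_pos_iff.mpr hx) 2
    have hQ1 : 0 < 1 - g01^2 := by
      have h := hpos (-g01) 1 0 (Or.inr (Or.inl one_ne_zero))
      rw [expand3, hii 0, hii 1, hii 2, h1, h2, h3] at h
      have heq : (-g01)^2*1 + (1:ℝ)^2*1 + (0:ℝ)^2*1 + 2*(-g01)*1*g01 + 2*1*0*g12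
          + 2*(-g01)*0*g20 = 1 - g01^2 := by ring
      linarith [h, heq]
    have hQ2 : 0 < (1 - g01^2) * (1 - g01^2 - g12^2 - g20^2 + 2*g01*g12*g20) := by
      have h := hpos (g01*g12 - g20) (g01*g20 - g12) (1 - g01^2)
        (Or.inr (Or.inr (ne_of_gt hQ1)))
      rw [expand3, hii 0, hii 1, hii 2, h1, h2, h3] at h
      have heq : (g01*g12 - g20)^2*1 + (g01*g20 - g12)^2*1 + (1 - g01^2)^2*1
          + 2*(g01*g12 - g20)*(g01*g20 - g12)*g01 + 2*(g01*g20 - g12)*(1 - g01^2)*g12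
          + 2*(g01*g12 - g20)*(1 - g01^2)*g20
          = (1 - g01^2) * (1 - g01^2 - g12^2 - g20^2 + 2*g01*g12*g20) := by ring
      linarith [h, heq]
    have hD : 0 < 1 - g01^2 - g12^2 - g20^2 + 2*g01*g12*g20 := by
      rcases mul_pos_iff.mp hQ2 with ⟨_, h⟩ | ⟨h, _⟩
      · exact h
      · linarith
    have hprod : 0 < (1 + Real.cos (φ 0) + Real.cos (φ 1) + Real.cos (φ 2))
        * (1 + Real.cos (φ 0) - Real.cos (φ 1) - Real.cos (φ 2))
        * (1 - Real.cos (φ 0) + Real.cos (φ 1) - Real.cos (φ 2))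
        * (1 + Real.cos (φ 2) - Real.cos (φ 0) - Real.cos (φ 1)) := by
      rw [← key]; exact mul_pos hD hPpos
    by_contra hng
    push_neg at hng
    have h4 : 1 + Real.cos (φ 2) - Real.cos (φ 0) - Real.cos (φ 1) ≤ 0 := by linarith
    have h123 := mul_pos (mul_pos hF1 hF2) hF3
    have hcontra := mul_nonpos_of_nonneg_of_nonpos h123.le h4
    linarith [hprod, hcontra]
  · intro hlt
    have hΔ : 0 < (1 - Real.cos (φ 0)^2) * (1 - Real.cos (φ 1)^2)
        - (Real.cos (φ 2) - Real.cos (φ 0) * Real.cos (φ 1))^2 :=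
      deltaPos _ _ _ hu1 hvu hwv hw0 hlt
    have hp : 0 < 1 - g01^2 := by
      have h' : 0 < (1 - g01^2) * ((1 - Real.cos (φ 0)^2) * (1 - Real.cos (φ 1)^2)) := by
        rw [hpid]; exact hΔ
      rcases mul_pos_iff.mp h' with ⟨h, _⟩ | ⟨_, h⟩
      · exact h
      · exact absurd (mul_pos hA' hB') (not_lt.mpr h.le)
    have hD : 0 < 1 - g01^2 - g12^2 - g20^2 + 2*g01*g12*g20 := by
      have hF4 : 0 < 1 + Real.cos (φ 2) - Real.cos (φ 0) - Real.cos (φ 1) := by linarith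
      have h' : 0 < (1 - g01^2 - g12^2 - g20^2 + 2*g01*g12*g20)
          * ((1 - Real.cos (φ 0)^2) * (1 - Real.cos (φ 1)^2) * (1 - Real.cos (φ 2)^2)) := by
        rw [key]; exact mul_pos (mul_pos (mul_pos hF1 hF2) hF3) hF4
      rcases mul_pos_iff.mp h' with ⟨h, _⟩ | ⟨_, h⟩
      · exact h
      · exact absurd hPpos (not_lt.mpr h.le)
    set sp := Real.sqrt (1 - g01^2) with hspdef
    have hsp2 : sp^2 = 1 - g01^2 := Real.sq_sqrt hp.le
    have hsp0 : 0 < sp := Real.sqrt_pos.mpr hp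
    set z := Real.sqrt ((1 - g01^2 - g12^2 - g20^2 + 2*g01*g12*g20) / (1 - g01^2)) with hzdef
    have hz2 : z^2 = (1 - g01^2 - g12^2 - g20^2 + 2*g01*g12*g20) / (1 - g01^2) :=
      Real.sq_sqrt (le_of_lt (div_pos hD hp))
    have hz0 : 0 < z := Real.sqrt_pos.mpr (div_pos hD hp)
    set q : ℝ := (g12 - g01*g20) / sp with hqdef
    set E : Fin 3 → EuclideanSpace ℝ (Fin 3) := ![!₂[1, 0, 0], !₂[g01, sp, 0], !₂[g20, q, z]]
      with hE
    refine ⟨E, ?_, ?_, ?_⟩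
    · rw [Fintype.linearIndependent_iff]
      intro c hc
      rw [Fin.sum_univ_three] at hc
      have k2 : c 2 * z = 0 := by
        have := congrArg (fun v : EuclideanSpace ℝ (Fin 3) => v 2) hc
        simpa [hE, PiLp.add_apply, PiLp.smul_apply, PiLp.zero_apply] using this
      have hc2 : c 2 = 0 := by
        rcases mul_eq_zero.mp k2 with h | h
        · exact h
        · exact absurd h (ne_of_gt hz0)
      have k1 : c 1 * sp + c 2 * q = 0 := by
        have := congrArg (fun v : EuclideanSpace ℝ (Fin 3) => v 1) hc
        simpa [hE, PiLp.add_apply, PiLp.smul_apply, PiLp.zero_apply] using this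
      have hc1 : c 1 = 0 := by
        rw [hc2] at k1
        have h' : c 1 * sp = 0 := by linarith [k1]
        rcases mul_eq_zero.mp h' with h | h
        · exact h
        · exact absurd h (ne_of_gt hsp0)
      have k0 : c 0 + c 1 * g01 + c 2 * g20 = 0 := by
        have := congrArg (fun v : EuclideanSpace ℝ (Fin 3) => v 0) hc
        simpa [hE, PiLp.add_apply, PiLp.smul_apply, PiLp.zero_apply] using this
      have hc0 : c 0 = 0 := by rw [hc1, hc2] at k0; linarith
      intro i; fin_cases i <;> assumption
    · have N0 : ‖E 0‖ = 1 := by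
        rw [EuclideanSpace.norm_eq]
        simp [hE, Fin.sum_univ_three]
      have N1 : ‖E 1‖ = 1 := by
        rw [EuclideanSpace.norm_eq]
        simp only [hE, Matrix.cons_val_zero, Matrix.cons_val_one, Matrix.head_cons,
          Fin.sum_univ_three, Matrix.cons_val_two, Matrix.tail_cons, Real.norm_eq_abs, sq_abs]
        rw [show g01 ^ 2 + sp ^ 2 + (0:ℝ) ^ 2 = 1 by rw [hsp2]; ring, Real.sqrt_one]
      have N2 : ‖E 2‖ = 1 := by
        have hval : g20 ^ 2 + q ^ 2 + z ^ 2 = 1 := by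
          rw [hqdef, hz2, div_pow, hsp2]
          field_simp
          ring
        rw [EuclideanSpace.norm_eq]
        simp only [hE, Matrix.cons_val_zero, Matrix.cons_val_one, Matrix.head_cons,
          Fin.sum_univ_three, Matrix.cons_val_two, Matrix.tail_cons, Real.norm_eq_abs, sq_abs]
        rw [hval, Real.sqrt_one]
      intro i
      fin_cases i
      exacts [N0, N1, N2]
    · have I0 : (⟪E 0, E 1⟫ : ℝ) = g01 := by
        rw [PiLp.inner_apply]
        simp [hE, RCLike.inner_apply, Fin.sum_univ_three]
      have I1 : (⟪E 1, E 2⟫ : ℝ) = g12 := by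
        rw [PiLp.inner_apply]
        simp only [hE, RCLike.inner_apply, conj_trivial, Fin.sum_univ_three, Matrix.cons_val_zero,
          Matrix.cons_val_one, Matrix.head_cons, Matrix.cons_val_two, Matrix.tail_cons]
        rw [hqdef]
        field_simp
        ring
      have I2 : (⟪E 2, E 0⟫ : ℝ) = g20 := by
        rw [PiLp.inner_apply]
        simp [hE, RCLike.inner_apply, Fin.sum_univ_three]
      intro i
      fin_cases i
      exacts [I0.trans hg01, I1.trans hg12, I2.trans hg20]
end

section
/- Let 0 ≤ x₃ ≤ x₂ ≤ x₁ < 1. Setting α_{i+2} = (x_{i+2} - x_i x_{i+1})/(√(1-x_i²)√(1-x_{i+1}²)) for each cyclic permutation (i,i+1,i+2) of (1,2,3), the inequality α₁² + α₂² + α₃² < 1 + 2α₁α₂α₃ holds if and only if x₁ + x₂ - x₃ - 1 < 0. -/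
set_option maxHeartbeats 1000000

/-- With `0 ≤ x₃ ≤ x₂ ≤ x₁ < 1` (indices `0,1,2` for `1,2,3`) and
`α_{i+2} = (x_{i+2} - x i x_{i+1})/(√(1-x_i²)√(1-x_{i+1}²))` cyclically, the
inequality `α₁² + α₂² + α₃² < 1 + 2α₁α₂α₃` holds iff `x₁ + x₂ - x₃ - 1 < 0`. -/
theorem stmt_15 (x α : Fin 3 → ℝ)
    (h3 : 0 ≤ x 2) (h32 : x 2 ≤ x 1) (h21 : x 1 ≤ x 0) (h1 : x 0 < 1)
    (hα : ∀ i : Fin 3, α (i + 2)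
      = (x (i + 2) - x i * x (i + 1))
        / (Real.sqrt (1 - x i ^ 2) * Real.sqrt (1 - x (i + 1) ^ 2))) :
    (α 0 ^ 2 + α 1 ^ 2 + α 2 ^ 2 < 1 + 2 * α 0 * α 1 * α 2) ↔
      x 0 + x 1 - x 2 - 1 < 0 := by
  set a := x 0 with ha
  set b := x 1 with hb
  set c := x 2 with hc
  have hb1 : b < 1 := lt_of_le_of_lt h21 h1
  have hc1 : c < 1 := lt_of_le_of_lt h32 hb1
  have hb0 : 0 ≤ b := le_trans h3 h32
  have ha0 : 0 ≤ a := le_trans hb0 h21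
  have hda : (0:ℝ) < 1 - a ^ 2 := by nlinarith
  have hdb : (0:ℝ) < 1 - b ^ 2 := by nlinarith
  have hdc : (0:ℝ) < 1 - c ^ 2 := by nlinarith
  set sa := Real.sqrt (1 - a ^ 2) with hsa
  set sb := Real.sqrt (1 - b ^ 2) with hsb
  set sc := Real.sqrt (1 - c ^ 2) with hsc
  have hsa0 : 0 < sa := Real.sqrt_pos.mpr hda
  have hsb0 : 0 < sb := Real.sqrt_pos.mpr hdb
  have hsc0 : 0 < sc := Real.sqrt_pos.mpr hdc
  have hsa2 : sa ^ 2 = 1 - a ^ 2 := Real.sq_sqrt hda.le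
  have hsb2 : sb ^ 2 = 1 - b ^ 2 := Real.sq_sqrt hdb.le
  have hsc2 : sc ^ 2 = 1 - c ^ 2 := Real.sq_sqrt hdc.le
  have e2 := hα 0
  have e0 := hα 1
  have e1 := hα 2
  simp only [show ((0:Fin 3)+2)=2 by decide, show ((0:Fin 3)+1)=1 by decide,
    show ((1:Fin 3)+2)=0 by decide, show ((1:Fin 3)+1)=2 by decide,
    show ((2:Fin 3)+2)=1 by decide, show ((2:Fin 3)+1)=0 by decide] at e0 e1 e2
  simp only [← ha, ← hb, ← hc, ← hsa, ← hsb, ← hsc] at e0 e1 e2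
  rw [e0, e1, e2]
  set D := sa ^ 2 * sb ^ 2 * sc ^ 2 with hD
  have hD0 : 0 < D := by positivity
  set N := (a - b - c + 1) * (a + b - c - 1) * (a - b + c - 1) * (a + b + c + 1) with hN
  set E := ((a - b * c) / (sb * sc)) ^ 2 + ((b - c * a) / (sc * sa)) ^ 2
    + ((c - a * b) / (sa * sb)) ^ 2
    - (1 + 2 * ((a - b * c) / (sb * sc)) * ((b - c * a) / (sc * sa))
        * ((c - a * b) / (sa * sb))) with hE
  have t1 : ((a - b * c) / (sb * sc)) ^ 2 * D = (a - b * c) ^ 2 * sa ^ 2 := by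
    rw [hD, div_pow]; field_simp
  have t2 : ((b - c * a) / (sc * sa)) ^ 2 * D = (b - c * a) ^ 2 * sb ^ 2 := by
    rw [hD, div_pow]; field_simp
  have t3 : ((c - a * b) / (sa * sb)) ^ 2 * D = (c - a * b) ^ 2 * sc ^ 2 := by
    rw [hD, div_pow]; field_simp
  have t4 : (1 + 2 * ((a - b * c) / (sb * sc)) * ((b - c * a) / (sc * sa))
      * ((c - a * b) / (sa * sb))) * D
      = D + 2 * (a - b * c) * (b - c * a) * (c - a * b) := by
    rw [hD]; field_simp
  have key : E * D = -N := by
    rw [hE, sub_mul, add_mul, add_mul, t1, t2, t3, t4, hD, hsa2, hsb2, hsc2, hN]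
    ring
  have hgoal : (((a - b * c) / (sb * sc)) ^ 2 + ((b - c * a) / (sc * sa)) ^ 2
      + ((c - a * b) / (sa * sb)) ^ 2 < 1 + 2 * ((a - b * c) / (sb * sc))
        * ((b - c * a) / (sc * sa)) * ((c - a * b) / (sa * sb))) ↔ E < 0 := by
    rw [hE]; constructor <;> intro h <;> linarith
  rw [hgoal]
  have f1 : 0 < a - b - c + 1 := by linarith
  have f3 : a - b + c - 1 < 0 := by linarith
  have f4 : 0 < a + b + c + 1 := by linarith
  constructor
  · intro hE0
    have h5 : E * D < 0 := mul_neg_of_neg_of_pos hE0 hD0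
    rw [key] at h5
    have hN0 : 0 < N := by linarith
    by_contra hcon
    push_neg at hcon
    have h6 : (a - b - c + 1) * (a + b - c - 1) * ((a - b + c - 1) * (a + b + c + 1)) ≤ 0 :=
      mul_nonpos_of_nonneg_of_nonpos (mul_nonneg f1.le (by linarith))
        (mul_neg_of_neg_of_pos f3 f4).le
    rw [hN, mul_assoc] at hN0
    linarith [h6, hN0]
  · intro h
    have hN0 : 0 < N := by
      have h7 : 0 < (a - b - c + 1) * (a + b - c - 1) * ((a - b + c - 1) * (a + b + c + 1)) :=
        mul_pos_of_neg_of_neg (mul_neg_of_pos_of_neg f1 (by linarith))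
          (mul_neg_of_neg_of_pos f3 f4)
      rw [hN, mul_assoc]; linarith [h7]
    have h5 : E * D < 0 := by rw [key]; linarith
    by_contra hcon
    push_neg at hcon
    linarith [h5, mul_nonneg hcon hD0.le]
end

section
/- Let {J₁, J₂, J₃} be a canonical quaternionic structure on H^{n-1} ≅ R^{4(n-1)} (J_i² = -id, J_i J_{i+1} = J_{i+2} = -J_{i+1}J_i, each J_i orthogonal), let {e₀, e₁, e₂, e₃} be unit vectors spanning a totally real subspace (⟨J_j e_k, e_l⟩ = 0 for all j ∈ {1,2,3}, k,l ∈ {0,1,2,3}) with ⟨e₀, e_i⟩ = 0 and ⟨e_i, e_{i+1}⟩ = (cos φ_{i+2} - cos φ_i cos φ_{i+1})/(sin φ_i sin φ_{i+1}), where 0 < φ₁ ≤ φ₂ ≤ φ₃ ≤ π/2. Define ξ₀ = e₀ and ξ_k = cos(φ_k)J_k e₀ + sin(φ_k)J_k e_k for k = 1,2,3. Then {ξ₀, ξ₁, ξ₂, ξ₃} is an orthonormal set. -/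
open RealInnerProductSpace Real

/-- With `{J₁,J₂,J₃}` a quaternionic structure on `ℍ^{n-1}` and `{e₀,e₁,e₂,e₃}`
unit vectors spanning a totally real subspace with the prescribed inner
products, the vectors `ξ₀ = e₀`, `ξ_k = cos(φ_k)J_k e₀ + sin(φ_k)J_k e_k`
form an orthonormal set. -/
theorem stmt_16 {V : Type*}
    [NormedAddCommGroup V] [InnerProductSpace ℝ V] [FiniteDimensional ℝ V]
    (J : Fin 3 → V →ₗ[ℝ] V)
    (hJorth : ∀ i, ∀ x y : V, (⟪J i x, J i y⟫ : ℝ) = ⟪x, y⟫)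
    (hJsq : ∀ i, ∀ x : V, J i (J i x) = -x)
    (hJmul : ∀ i : Fin 3, ∀ x : V, J i (J (i + 1) x) = J (i + 2) x)
    (hJanti : ∀ i : Fin 3, ∀ x : V, J (i + 1) (J i x) = -J (i + 2) x)
    (φ : Fin 3 → ℝ)
    (hφ0 : 0 < φ 0) (hφ01 : φ 0 ≤ φ 1) (hφ12 : φ 1 ≤ φ 2) (hφ2 : φ 2 ≤ π / 2)
    (e₀ : V) (e : Fin 3 → V)
    (he₀ : ‖e₀‖ = 1) (he : ∀ i, ‖e i‖ = 1)
    (htotreal : ∀ j : Fin 3,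
      (⟪J j e₀, e₀⟫ : ℝ) = 0 ∧ (∀ k, (⟪J j e₀, e k⟫ : ℝ) = 0) ∧
      (∀ k, (⟪J j (e k), e₀⟫ : ℝ) = 0) ∧ (∀ k l, (⟪J j (e k), e l⟫ : ℝ) = 0))
    (horth : ∀ i, (⟪e₀, e i⟫ : ℝ) = 0)
    (hinner : ∀ i : Fin 3, (⟪e i, e (i + 1)⟫ : ℝ)
      = (Real.cos (φ (i + 2)) - Real.cos (φ i) * Real.cos (φ (i + 1)))
        / (Real.sin (φ i) * Real.sin (φ (i + 1))))
    (ξ : Fin 4 → V) (hξ0 : ξ 0 = e₀)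
    (hξ : ∀ k : Fin 3,
      ξ k.succ = Real.cos (φ k) • J k e₀ + Real.sin (φ k) • J k (e k)) :
    Orthonormal ℝ ξ := by
  -- ⟪J m x, y⟫ = 0 for x, y among e₀, e a
  have tz : ∀ (m : Fin 3) (x y : V),
      (x = e₀ ∨ ∃ a, x = e a) → (y = e₀ ∨ ∃ b, y = e b) →
      (⟪J m x, y⟫ : ℝ) = 0 := by
    intro m x y hx hy
    rcases hx with rfl | ⟨a, rfl⟩ <;> rcases hy with rfl | ⟨b, rfl⟩
    · exact (htotreal m).1
    · exact (htotreal m).2.1 b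
    · exact (htotreal m).2.2.1 a
    · exact (htotreal m).2.2.2 a b
  -- product rules for distinct indices
  have hJJ : ∀ j k : Fin 3, j ≠ k → ∃ (m : Fin 3) (s : ℝ), (s = 1 ∨ s = -1) ∧
      ∀ x : V, J k (J j x) = s • J m x := by
    intro j k hjk
    fin_cases j <;> fin_cases k <;>
      first
      | exact absurd rfl hjk
      | exact ⟨2, -1, Or.inr rfl, fun x => by
          simpa [neg_one_smul] using hJanti 0 x⟩
      | exact ⟨1, 1, Or.inl rfl, fun x => by
          simpa using hJmul 2 x⟩
      | exact ⟨2, 1, Or.inl rfl, fun x => by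
          simpa using hJmul 0 x⟩
      | exact ⟨0, -1, Or.inr rfl, fun x => by
          simpa [neg_one_smul] using hJanti 1 x⟩
      | exact ⟨1, -1, Or.inr rfl, fun x => by
          simpa [neg_one_smul] using hJanti 2 x⟩
      | exact ⟨0, 1, Or.inl rfl, fun x => by
          simpa using hJmul 1 x⟩
  have cross : ∀ j k : Fin 3, j ≠ k → ∀ x y : V,
      (x = e₀ ∨ ∃ a, x = e a) → (y = e₀ ∨ ∃ b, y = e b) →
      (⟪J j x, J k y⟫ : ℝ) = 0 := by
    intro j k hjk x y hx hy
    obtain ⟨m, s, _, hm⟩ := hJJ j k hjk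
    have : (⟪J j x, J k y⟫ : ℝ) = ⟪J k (J j x), J k (J k y)⟫ := (hJorth k _ _).symm
    rw [this, hm, hJsq, real_inner_smul_left, inner_neg_right, tz m x y hx hy]
    ring
  have n0 : (⟪e₀, e₀⟫ : ℝ) = 1 := by
    rw [real_inner_self_eq_norm_mul_norm, he₀]; norm_num
  have nk : ∀ a : Fin 3, (⟪e a, e a⟫ : ℝ) = 1 := fun a => by
    rw [real_inner_self_eq_norm_mul_norm, he a]; norm_num
  have main : ∀ a b : Fin 3, (⟪ξ a.succ, ξ b.succ⟫ : ℝ) = if a = b then 1 else 0 := by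
    intro a b
    rw [hξ a, hξ b]
    simp only [inner_add_left, inner_add_right, real_inner_smul_left,
      real_inner_smul_right]
    by_cases hab : a = b
    · subst hab
      rw [hJorth, hJorth, hJorth, hJorth, n0, nk,
        real_inner_comm e₀ (e a), horth]
      rw [if_pos rfl]
      linear_combination Real.sin_sq_add_cos_sq (φ a)
    · rw [cross a b hab _ _ (Or.inl rfl) (Or.inl rfl),
        cross a b hab _ _ (Or.inl rfl) (Or.inr ⟨b, rfl⟩),
        cross a b hab _ _ (Or.inr ⟨a, rfl⟩) (Or.inl rfl),
        cross a b hab _ _ (Or.inr ⟨a, rfl⟩) (Or.inr ⟨b, rfl⟩)]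
      simp [hab]
  have z0 : ∀ b : Fin 3, (⟪ξ 0, ξ b.succ⟫ : ℝ) = 0 := by
    intro b
    rw [hξ0, hξ b]
    simp only [inner_add_right, real_inner_smul_right]
    rw [real_inner_comm (J b e₀) e₀, real_inner_comm (J b (e b)) e₀,
      tz b _ _ (Or.inl rfl) (Or.inl rfl), tz b _ _ (Or.inr ⟨b, rfl⟩) (Or.inl rfl)]
    ring
  rw [orthonormal_iff_ite]
  intro i j
  induction i using Fin.cases with
  | zero =>
    induction j using Fin.cases with
    | zero => simpa [hξ0] using n0
    | succ b => simpa [Fin.succ_ne_zero b, (Fin.succ_ne_zero b).symm] using z0 b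
  | succ a =>
    induction j using Fin.cases with
    | zero =>
      rw [real_inner_comm]
      simpa [(Fin.succ_ne_zero a).symm, Fin.succ_ne_zero a] using z0 a
    | succ b => simpa [Fin.succ_inj] using main a b
end

section
/- In the setting of the previous construction, let w⊥ = span{ξ₀, ξ₁, ξ₂, ξ₃} and let ξ = a₀ξ₀ + a₁ξ₁ + a₂ξ₂ + a₃ξ₃ be any unit vector in w⊥. Then the 3×3 matrix with entries L_{jk} = Σ_{l=0}^{3} ⟨J_j ξ, ξ_l⟩⟨J_k ξ, ξ_l⟩ (j,k ∈ {1,2,3}) is the diagonal matrix diag(cos²φ₁, cos²φ₂, cos²φ₃). In particular, w⊥ has constant quaternionic Kähler angle (φ₁, φ₂, φ₃). -/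
open RealInnerProductSpace Real

set_option maxHeartbeats 1000000

/-- For any unit vector `ξ = a₀ξ₀ + a₁ξ₁ + a₂ξ₂ + a₃ξ₃` in
`w⊥ = span{ξ₀,ξ₁,ξ₂,ξ₃}`, the matrix
`L_{jk} = Σ_l ⟪J_j ξ, ξ_l⟫⟪J_k ξ, ξ_l⟫` equals `diag(cos²φ₁, cos²φ₂, cos²φ₃)`;
in particular `w⊥` has constant quaternionic Kähler angle `(φ₁,φ₂,φ₃)`. -/
theorem stmt_17 {V : Type*}
    [NormedAddCommGroup V] [InnerProductSpace ℝ V] [FiniteDimensional ℝ V]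
    (J : Fin 3 → V →ₗ[ℝ] V)
    (hJorth : ∀ i, ∀ x y : V, (⟪J i x, J i y⟫ : ℝ) = ⟪x, y⟫)
    (hJsq : ∀ i, ∀ x : V, J i (J i x) = -x)
    (hJmul : ∀ i : Fin 3, ∀ x : V, J i (J (i + 1) x) = J (i + 2) x)
    (hJanti : ∀ i : Fin 3, ∀ x : V, J (i + 1) (J i x) = -J (i + 2) x)
    (φ : Fin 3 → ℝ)
    (hφ0 : 0 < φ 0) (hφ01 : φ 0 ≤ φ 1) (hφ12 : φ 1 ≤ φ 2) (hφ2 : φ 2 ≤ π / 2)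
    (hφsum : Real.cos (φ 0) + Real.cos (φ 1) < 1 + Real.cos (φ 2))
    (e₀ : V) (e : Fin 3 → V)
    (he₀ : ‖e₀‖ = 1) (he : ∀ i, ‖e i‖ = 1)
    (htotreal : ∀ j : Fin 3,
      (⟪J j e₀, e₀⟫ : ℝ) = 0 ∧ (∀ k, (⟪J j e₀, e k⟫ : ℝ) = 0) ∧
      (∀ k, (⟪J j (e k), e₀⟫ : ℝ) = 0) ∧ (∀ k l, (⟪J j (e k), e l⟫ : ℝ) = 0))
    (horth : ∀ i, (⟪e₀, e i⟫ : ℝ) = 0)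
    (hinner : ∀ i : Fin 3, (⟪e i, e (i + 1)⟫ : ℝ)
      = (Real.cos (φ (i + 2)) - Real.cos (φ i) * Real.cos (φ (i + 1)))
        / (Real.sin (φ i) * Real.sin (φ (i + 1))))
    (ξ : Fin 4 → V) (hξ0 : ξ 0 = e₀)
    (hξ : ∀ k : Fin 3,
      ξ k.succ = Real.cos (φ k) • J k e₀ + Real.sin (φ k) • J k (e k))
    (a : Fin 4 → ℝ) (ζ : V) (hζ : ζ = ∑ l : Fin 4, a l • ξ l)
    (hζunit : ‖ζ‖ = 1) :
    ∀ j k : Fin 3,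
      (∑ l : Fin 4, (⟪J j ζ, ξ l⟫ : ℝ) * (⟪J k ζ, ξ l⟫ : ℝ))
        = if j = k then Real.cos (φ j) ^ 2 else 0 := by
  -- sin positivity
  have hpi := Real.pi_pos
  have hφ1pos : 0 < φ 1 := lt_of_lt_of_le hφ0 hφ01
  have hφ2pos : 0 < φ 2 := lt_of_lt_of_le hφ1pos hφ12
  have hs0 : Real.sin (φ 0) ≠ 0 :=
    ne_of_gt (Real.sin_pos_of_pos_of_lt_pi hφ0 (by linarith))
  have hs1 : Real.sin (φ 1) ≠ 0 :=
    ne_of_gt (Real.sin_pos_of_pos_of_lt_pi hφ1pos (by linarith))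
  have hs2 : Real.sin (φ 2) ≠ 0 :=
    ne_of_gt (Real.sin_pos_of_pos_of_lt_pi hφ2pos (by linarith))
  -- skew symmetry
  have hskew : ∀ (c : Fin 3) (x y : V), (⟪J c x, y⟫ : ℝ) = -⟪x, J c y⟫ := by
    intro c x y
    have h := hJorth c x (J c y)
    rw [hJsq c y, inner_neg_right] at h
    linarith
  -- quaternion product rules, concrete
  have hm01 : ∀ x : V, J 0 (J 1 x) = J 2 x := fun x => by simpa using hJmul 0 x
  have hm12 : ∀ x : V, J 1 (J 2 x) = J 0 x := fun x => by simpa using hJmul 1 x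
  have hm20 : ∀ x : V, J 2 (J 0 x) = J 1 x := fun x => by simpa using hJmul 2 x
  have ha10 : ∀ x : V, J 1 (J 0 x) = -J 2 x := fun x => by simpa using hJanti 0 x
  have ha21 : ∀ x : V, J 2 (J 1 x) = -J 0 x := fun x => by simpa using hJanti 1 x
  have ha02 : ∀ x : V, J 0 (J 2 x) = -J 1 x := fun x => by simpa using hJanti 2 x
  -- totally real facts
  have ht1 : ∀ c : Fin 3, (⟪J c e₀, e₀⟫ : ℝ) = 0 := fun c => (htotreal c).1
  have ht2 : ∀ (c : Fin 3) k, (⟪J c e₀, e k⟫ : ℝ) = 0 := fun c => (htotreal c).2.1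
  have ht3 : ∀ (c : Fin 3) k, (⟪J c (e k), e₀⟫ : ℝ) = 0 := fun c => (htotreal c).2.2.1
  have ht4 : ∀ (c : Fin 3) k l, (⟪J c (e k), e l⟫ : ℝ) = 0 := fun c => (htotreal c).2.2.2
  have ht1' : ∀ c : Fin 3, (⟪e₀, J c e₀⟫ : ℝ) = 0 := fun c => by
    rw [real_inner_comm]; exact ht1 c
  have ht2' : ∀ (c : Fin 3) k, (⟪e k, J c e₀⟫ : ℝ) = 0 := fun c k => by
    rw [real_inner_comm]; exact ht2 c k
  have ht3' : ∀ (c : Fin 3) k, (⟪e₀, J c (e k)⟫ : ℝ) = 0 := fun c k => by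
    rw [real_inner_comm]; exact ht3 c k
  have ht4' : ∀ (c : Fin 3) k l, (⟪e l, J c (e k)⟫ : ℝ) = 0 := fun c k l => by
    rw [real_inner_comm]; exact ht4 c k l
  have horth' : ∀ k, (⟪e k, e₀⟫ : ℝ) = 0 := fun k => by
    rw [real_inner_comm]; exact horth k
  -- self inner products
  have hse0 : (⟪e₀, e₀⟫ : ℝ) = 1 := by
    rw [real_inner_self_eq_norm_sq, he₀]; norm_num
  have hsek : ∀ k, (⟪e k, e k⟫ : ℝ) = 1 := fun k => by
    rw [real_inner_self_eq_norm_sq, he k]; norm_num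
  have gJe00 : ∀ (b c : Fin 3), (⟪J b e₀, J c e₀⟫ : ℝ) = if b = c then 1 else 0 := by
    intro b c
    rcases eq_or_ne b c with rfl | hbc
    · rw [if_pos rfl, hJorth, hse0]
    · rw [if_neg hbc]
      fin_cases b <;> fin_cases c <;>
        first
          | exact absurd rfl hbc
          | (rw [hskew]; simp [hm01, hm12, hm20, ha10, ha21, ha02, ht1', ht2', ht3', ht4'])
  have gJe0k : ∀ (b c : Fin 3) k, (⟪J b e₀, J c (e k)⟫ : ℝ) = if b = c then 0 else 0 := by
    intro b c k
    rcases eq_or_ne b c with rfl | hbc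
    · rw [if_pos rfl, hJorth]; exact horth k
    · rw [if_neg hbc]
      fin_cases b <;> fin_cases c <;>
        first
          | exact absurd rfl hbc
          | (rw [hskew]; simp [hm01, hm12, hm20, ha10, ha21, ha02, ht1', ht2', ht3', ht4'])
  have gJek0 : ∀ (b c : Fin 3) k, (⟪J b (e k), J c e₀⟫ : ℝ) = if b = c then 0 else 0 := by
    intro b c k
    rcases eq_or_ne b c with rfl | hbc
    · rw [if_pos rfl, hJorth]; exact horth' k
    · rw [if_neg hbc]
      fin_cases b <;> fin_cases c <;>
        first
          | exact absurd rfl hbc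
          | (rw [hskew]; simp [hm01, hm12, hm20, ha10, ha21, ha02, ht1', ht2', ht3', ht4'])
  have gJekk : ∀ (b c : Fin 3) k l, (⟪J b (e k), J c (e l)⟫ : ℝ) = if b = c then ⟪e k, e l⟫ else 0 := by
    intro b c k l
    rcases eq_or_ne b c with rfl | hbc
    · rw [if_pos rfl, hJorth]
    · rw [if_neg hbc]
      fin_cases b <;> fin_cases c <;>
        first
          | exact absurd rfl hbc
          | (rw [hskew]; simp [hm01, hm12, hm20, ha10, ha21, ha02, ht1', ht2', ht3', ht4'])
  have hA00 : (⟪J 0 e₀, J 0 e₀⟫ : ℝ) = 1 := by simpa using gJe00 0 0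
  have hB00 : ∀ k, (⟪J 0 e₀, J 0 (e k)⟫ : ℝ) = 0 := fun k => by simpa using gJe0k 0 0 k
  have hC00 : ∀ k, (⟪J 0 (e k), J 0 e₀⟫ : ℝ) = 0 := fun k => by simpa using gJek0 0 0 k
  have hD00 : ∀ k l, (⟪J 0 (e k), J 0 (e l)⟫ : ℝ) = ⟪e k, e l⟫ := fun k l => by simpa using gJekk 0 0 k l
  have hA01 : (⟪J 0 e₀, J 1 e₀⟫ : ℝ) = 0 := by simpa using gJe00 0 1
  have hB01 : ∀ k, (⟪J 0 e₀, J 1 (e k)⟫ : ℝ) = 0 := fun k => by simpa using gJe0k 0 1 k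
  have hC01 : ∀ k, (⟪J 0 (e k), J 1 e₀⟫ : ℝ) = 0 := fun k => by simpa using gJek0 0 1 k
  have hD01 : ∀ k l, (⟪J 0 (e k), J 1 (e l)⟫ : ℝ) = 0 := fun k l => by simpa using gJekk 0 1 k l
  have hA02 : (⟪J 0 e₀, J 2 e₀⟫ : ℝ) = 0 := by simpa using gJe00 0 2
  have hB02 : ∀ k, (⟪J 0 e₀, J 2 (e k)⟫ : ℝ) = 0 := fun k => by simpa using gJe0k 0 2 k
  have hC02 : ∀ k, (⟪J 0 (e k), J 2 e₀⟫ : ℝ) = 0 := fun k => by simpa using gJek0 0 2 k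
  have hD02 : ∀ k l, (⟪J 0 (e k), J 2 (e l)⟫ : ℝ) = 0 := fun k l => by simpa using gJekk 0 2 k l
  have hA10 : (⟪J 1 e₀, J 0 e₀⟫ : ℝ) = 0 := by simpa using gJe00 1 0
  have hB10 : ∀ k, (⟪J 1 e₀, J 0 (e k)⟫ : ℝ) = 0 := fun k => by simpa using gJe0k 1 0 k
  have hC10 : ∀ k, (⟪J 1 (e k), J 0 e₀⟫ : ℝ) = 0 := fun k => by simpa using gJek0 1 0 k
  have hD10 : ∀ k l, (⟪J 1 (e k), J 0 (e l)⟫ : ℝ) = 0 := fun k l => by simpa using gJekk 1 0 k l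
  have hA11 : (⟪J 1 e₀, J 1 e₀⟫ : ℝ) = 1 := by simpa using gJe00 1 1
  have hB11 : ∀ k, (⟪J 1 e₀, J 1 (e k)⟫ : ℝ) = 0 := fun k => by simpa using gJe0k 1 1 k
  have hC11 : ∀ k, (⟪J 1 (e k), J 1 e₀⟫ : ℝ) = 0 := fun k => by simpa using gJek0 1 1 k
  have hD11 : ∀ k l, (⟪J 1 (e k), J 1 (e l)⟫ : ℝ) = ⟪e k, e l⟫ := fun k l => by simpa using gJekk 1 1 k l
  have hA12 : (⟪J 1 e₀, J 2 e₀⟫ : ℝ) = 0 := by simpa using gJe00 1 2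
  have hB12 : ∀ k, (⟪J 1 e₀, J 2 (e k)⟫ : ℝ) = 0 := fun k => by simpa using gJe0k 1 2 k
  have hC12 : ∀ k, (⟪J 1 (e k), J 2 e₀⟫ : ℝ) = 0 := fun k => by simpa using gJek0 1 2 k
  have hD12 : ∀ k l, (⟪J 1 (e k), J 2 (e l)⟫ : ℝ) = 0 := fun k l => by simpa using gJekk 1 2 k l
  have hA20 : (⟪J 2 e₀, J 0 e₀⟫ : ℝ) = 0 := by simpa using gJe00 2 0
  have hB20 : ∀ k, (⟪J 2 e₀, J 0 (e k)⟫ : ℝ) = 0 := fun k => by simpa using gJe0k 2 0 k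
  have hC20 : ∀ k, (⟪J 2 (e k), J 0 e₀⟫ : ℝ) = 0 := fun k => by simpa using gJek0 2 0 k
  have hD20 : ∀ k l, (⟪J 2 (e k), J 0 (e l)⟫ : ℝ) = 0 := fun k l => by simpa using gJekk 2 0 k l
  have hA21 : (⟪J 2 e₀, J 1 e₀⟫ : ℝ) = 0 := by simpa using gJe00 2 1
  have hB21 : ∀ k, (⟪J 2 e₀, J 1 (e k)⟫ : ℝ) = 0 := fun k => by simpa using gJe0k 2 1 k
  have hC21 : ∀ k, (⟪J 2 (e k), J 1 e₀⟫ : ℝ) = 0 := fun k => by simpa using gJek0 2 1 k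
  have hD21 : ∀ k l, (⟪J 2 (e k), J 1 (e l)⟫ : ℝ) = 0 := fun k l => by simpa using gJekk 2 1 k l
  have hA22 : (⟪J 2 e₀, J 2 e₀⟫ : ℝ) = 1 := by simpa using gJe00 2 2
  have hB22 : ∀ k, (⟪J 2 e₀, J 2 (e k)⟫ : ℝ) = 0 := fun k => by simpa using gJe0k 2 2 k
  have hC22 : ∀ k, (⟪J 2 (e k), J 2 e₀⟫ : ℝ) = 0 := fun k => by simpa using gJek0 2 2 k
  have hD22 : ∀ k l, (⟪J 2 (e k), J 2 (e l)⟫ : ℝ) = ⟪e k, e l⟫ := fun k l => by simpa using gJekk 2 2 k l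
  -- explicit ξ's
  have hξ1 : ξ 1 = Real.cos (φ 0) • J 0 e₀ + Real.sin (φ 0) • J 0 (e 0) := hξ 0
  have hξ2 : ξ 2 = Real.cos (φ 1) • J 1 e₀ + Real.sin (φ 1) • J 1 (e 1) := hξ 1
  have hξ3 : ξ 3 = Real.cos (φ 2) • J 2 e₀ + Real.sin (φ 2) • J 2 (e 2) := hξ 2
  -- explicit e-inner products
  have he01 : (⟪e 0, e 1⟫ : ℝ)
      = (Real.cos (φ 2) - Real.cos (φ 0) * Real.cos (φ 1))
        / (Real.sin (φ 0) * Real.sin (φ 1)) := by simpa using hinner 0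
  have he12 : (⟪e 1, e 2⟫ : ℝ)
      = (Real.cos (φ 0) - Real.cos (φ 1) * Real.cos (φ 2))
        / (Real.sin (φ 1) * Real.sin (φ 2)) := by simpa using hinner 1
  have he20 : (⟪e 2, e 0⟫ : ℝ)
      = (Real.cos (φ 1) - Real.cos (φ 2) * Real.cos (φ 0))
        / (Real.sin (φ 2) * Real.sin (φ 0)) := by simpa using hinner 2
  have he10 : (⟪e 1, e 0⟫ : ℝ)
      = (Real.cos (φ 2) - Real.cos (φ 0) * Real.cos (φ 1))
        / (Real.sin (φ 0) * Real.sin (φ 1)) := by rw [real_inner_comm]; exact he01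
  have he21 : (⟪e 2, e 1⟫ : ℝ)
      = (Real.cos (φ 0) - Real.cos (φ 1) * Real.cos (φ 2))
        / (Real.sin (φ 1) * Real.sin (φ 2)) := by rw [real_inner_comm]; exact he12
  have he02 : (⟪e 0, e 2⟫ : ℝ)
      = (Real.cos (φ 1) - Real.cos (φ 2) * Real.cos (φ 0))
        / (Real.sin (φ 2) * Real.sin (φ 0)) := by rw [real_inner_comm]; exact he20
  have hon : ∀ m l : Fin 4, (⟪ξ m, ξ l⟫ : ℝ) = if m = l then 1 else 0 := by
    have h04 : ∀ m : Fin 4, m = 0 ∨ m = 1 ∨ m = 2 ∨ m = 3 := by decide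
    intro m l
    rcases h04 m with rfl | rfl | rfl | rfl <;> rcases h04 l with rfl | rfl | rfl | rfl <;>
      simp only [Fin.reduceEq, reduceIte, hξ0, hξ1, hξ2, hξ3, map_add, map_smul, hJsq, hm01, hm12, hm20, ha10, ha21, ha02, inner_add_left, inner_add_right, real_inner_smul_left, real_inner_smul_right, inner_neg_left, inner_neg_right, smul_neg, neg_neg, hA00, hB00, hC00, hD00, hA01, hB01, hC01, hD01, hA02, hB02, hC02, hD02, hA10, hB10, hC10, hD10, hA11, hB11, hC11, hD11, hA12, hB12, hC12, hD12, hA20, hB20, hC20, hD20, hA21, hB21, hC21, hD21, hA22, hB22, hC22, hD22, ht1, ht2, ht3, ht4, ht1', ht2', ht3', ht4', hse0, hsek, horth, horth', mul_zero, zero_mul, mul_one, one_mul, mul_neg, neg_mul, neg_zero, add_zero, zero_add] <;>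
      first
        | rfl
        | linear_combination Real.sin_sq_add_cos_sq (φ 0)
        | linear_combination Real.sin_sq_add_cos_sq (φ 1)
        | linear_combination Real.sin_sq_add_cos_sq (φ 2)
        | ring
  have hζζ : (⟪ζ, ζ⟫ : ℝ) = 1 := by
    rw [real_inner_self_eq_norm_sq, hζunit]; norm_num
  have hnorm : a 0 ^ 2 + a 1 ^ 2 + a 2 ^ 2 + a 3 ^ 2 = 1 := by
    rw [hζ] at hζζ
    simp only [Fin.sum_univ_four, inner_add_left, inner_add_right,
      real_inner_smul_left, real_inner_smul_right, hon,
      Fin.reduceEq, reduceIte, mul_zero, mul_one, add_zero, zero_add] at hζζ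
    linear_combination hζζ
  have hb00 : (⟪J 0 ζ, ξ 0⟫ : ℝ) = -(Real.cos (φ 0) * a 1) := by
    rw [hζ]
    simp only [Fin.sum_univ_four, map_add, map_smul, hξ0, hξ1, hξ2, hξ3, map_add, map_smul, hJsq, hm01, hm12, hm20, ha10, ha21, ha02, inner_add_left, inner_add_right, real_inner_smul_left, real_inner_smul_right, inner_neg_left, inner_neg_right, smul_neg, neg_neg, hA00, hB00, hC00, hD00, hA01, hB01, hC01, hD01, hA02, hB02, hC02, hD02, hA10, hB10, hC10, hD10, hA11, hB11, hC11, hD11, hA12, hB12, hC12, hD12, hA20, hB20, hC20, hD20, hA21, hB21, hC21, hD21, hA22, hB22, hC22, hD22, ht1, ht2, ht3, ht4, ht1', ht2', ht3', ht4', hse0, hsek, horth, horth', mul_zero, zero_mul, mul_one, one_mul, mul_neg, neg_mul, neg_zero, add_zero, zero_add,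
      he01, he12, he20, he10, he21, he02]
    try ring
    try field_simp
    try ring
  have hb01 : (⟪J 0 ζ, ξ 1⟫ : ℝ) = Real.cos (φ 0) * a 0 := by
    rw [hζ]
    simp only [Fin.sum_univ_four, map_add, map_smul, hξ0, hξ1, hξ2, hξ3, map_add, map_smul, hJsq, hm01, hm12, hm20, ha10, ha21, ha02, inner_add_left, inner_add_right, real_inner_smul_left, real_inner_smul_right, inner_neg_left, inner_neg_right, smul_neg, neg_neg, hA00, hB00, hC00, hD00, hA01, hB01, hC01, hD01, hA02, hB02, hC02, hD02, hA10, hB10, hC10, hD10, hA11, hB11, hC11, hD11, hA12, hB12, hC12, hD12, hA20, hB20, hC20, hD20, hA21, hB21, hC21, hD21, hA22, hB22, hC22, hD22, ht1, ht2, ht3, ht4, ht1', ht2', ht3', ht4', hse0, hsek, horth, horth', mul_zero, zero_mul, mul_one, one_mul, mul_neg, neg_mul, neg_zero, add_zero, zero_add,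
      he01, he12, he20, he10, he21, he02]
    try ring
    try field_simp
    try ring
  have hb02 : (⟪J 0 ζ, ξ 2⟫ : ℝ) = -(Real.cos (φ 0) * a 3) := by
    rw [hζ]
    simp only [Fin.sum_univ_four, map_add, map_smul, hξ0, hξ1, hξ2, hξ3, map_add, map_smul, hJsq, hm01, hm12, hm20, ha10, ha21, ha02, inner_add_left, inner_add_right, real_inner_smul_left, real_inner_smul_right, inner_neg_left, inner_neg_right, smul_neg, neg_neg, hA00, hB00, hC00, hD00, hA01, hB01, hC01, hD01, hA02, hB02, hC02, hD02, hA10, hB10, hC10, hD10, hA11, hB11, hC11, hD11, hA12, hB12, hC12, hD12, hA20, hB20, hC20, hD20, hA21, hB21, hC21, hD21, hA22, hB22, hC22, hD22, ht1, ht2, ht3, ht4, ht1', ht2', ht3', ht4', hse0, hsek, horth, horth', mul_zero, zero_mul, mul_one, one_mul, mul_neg, neg_mul, neg_zero, add_zero, zero_add,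
      he01, he12, he20, he10, he21, he02]
    try ring
    try field_simp
    try ring
  have hb03 : (⟪J 0 ζ, ξ 3⟫ : ℝ) = Real.cos (φ 0) * a 2 := by
    rw [hζ]
    simp only [Fin.sum_univ_four, map_add, map_smul, hξ0, hξ1, hξ2, hξ3, map_add, map_smul, hJsq, hm01, hm12, hm20, ha10, ha21, ha02, inner_add_left, inner_add_right, real_inner_smul_left, real_inner_smul_right, inner_neg_left, inner_neg_right, smul_neg, neg_neg, hA00, hB00, hC00, hD00, hA01, hB01, hC01, hD01, hA02, hB02, hC02, hD02, hA10, hB10, hC10, hD10, hA11, hB11, hC11, hD11, hA12, hB12, hC12, hD12, hA20, hB20, hC20, hD20, hA21, hB21, hC21, hD21, hA22, hB22, hC22, hD22, ht1, ht2, ht3, ht4, ht1', ht2', ht3', ht4', hse0, hsek, horth, horth', mul_zero, zero_mul, mul_one, one_mul, mul_neg, neg_mul, neg_zero, add_zero, zero_add,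
      he01, he12, he20, he10, he21, he02]
    try ring
    try field_simp
    try ring
  have hb10 : (⟪J 1 ζ, ξ 0⟫ : ℝ) = -(Real.cos (φ 1) * a 2) := by
    rw [hζ]
    simp only [Fin.sum_univ_four, map_add, map_smul, hξ0, hξ1, hξ2, hξ3, map_add, map_smul, hJsq, hm01, hm12, hm20, ha10, ha21, ha02, inner_add_left, inner_add_right, real_inner_smul_left, real_inner_smul_right, inner_neg_left, inner_neg_right, smul_neg, neg_neg, hA00, hB00, hC00, hD00, hA01, hB01, hC01, hD01, hA02, hB02, hC02, hD02, hA10, hB10, hC10, hD10, hA11, hB11, hC11, hD11, hA12, hB12, hC12, hD12, hA20, hB20, hC20, hD20, hA21, hB21, hC21, hD21, hA22, hB22, hC22, hD22, ht1, ht2, ht3, ht4, ht1', ht2', ht3', ht4', hse0, hsek, horth, horth', mul_zero, zero_mul, mul_one, one_mul, mul_neg, neg_mul, neg_zero, add_zero, zero_add,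
      he01, he12, he20, he10, he21, he02]
    try ring
    try field_simp
    try ring
  have hb11 : (⟪J 1 ζ, ξ 1⟫ : ℝ) = Real.cos (φ 1) * a 3 := by
    rw [hζ]
    simp only [Fin.sum_univ_four, map_add, map_smul, hξ0, hξ1, hξ2, hξ3, map_add, map_smul, hJsq, hm01, hm12, hm20, ha10, ha21, ha02, inner_add_left, inner_add_right, real_inner_smul_left, real_inner_smul_right, inner_neg_left, inner_neg_right, smul_neg, neg_neg, hA00, hB00, hC00, hD00, hA01, hB01, hC01, hD01, hA02, hB02, hC02, hD02, hA10, hB10, hC10, hD10, hA11, hB11, hC11, hD11, hA12, hB12, hC12, hD12, hA20, hB20, hC20, hD20, hA21, hB21, hC21, hD21, hA22, hB22, hC22, hD22, ht1, ht2, ht3, ht4, ht1', ht2', ht3', ht4', hse0, hsek, horth, horth', mul_zero, zero_mul, mul_one, one_mul, mul_neg, neg_mul, neg_zero, add_zero, zero_add,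
      he01, he12, he20, he10, he21, he02]
    try ring
    try field_simp
    try ring
  have hb12 : (⟪J 1 ζ, ξ 2⟫ : ℝ) = Real.cos (φ 1) * a 0 := by
    rw [hζ]
    simp only [Fin.sum_univ_four, map_add, map_smul, hξ0, hξ1, hξ2, hξ3, map_add, map_smul, hJsq, hm01, hm12, hm20, ha10, ha21, ha02, inner_add_left, inner_add_right, real_inner_smul_left, real_inner_smul_right, inner_neg_left, inner_neg_right, smul_neg, neg_neg, hA00, hB00, hC00, hD00, hA01, hB01, hC01, hD01, hA02, hB02, hC02, hD02, hA10, hB10, hC10, hD10, hA11, hB11, hC11, hD11, hA12, hB12, hC12, hD12, hA20, hB20, hC20, hD20, hA21, hB21, hC21, hD21, hA22, hB22, hC22, hD22, ht1, ht2, ht3, ht4, ht1', ht2', ht3', ht4', hse0, hsek, horth, horth', mul_zero, zero_mul, mul_one, one_mul, mul_neg, neg_mul, neg_zero, add_zero, zero_add,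
      he01, he12, he20, he10, he21, he02]
    try ring
    try field_simp
    try ring
  have hb13 : (⟪J 1 ζ, ξ 3⟫ : ℝ) = -(Real.cos (φ 1) * a 1) := by
    rw [hζ]
    simp only [Fin.sum_univ_four, map_add, map_smul, hξ0, hξ1, hξ2, hξ3, map_add, map_smul, hJsq, hm01, hm12, hm20, ha10, ha21, ha02, inner_add_left, inner_add_right, real_inner_smul_left, real_inner_smul_right, inner_neg_left, inner_neg_right, smul_neg, neg_neg, hA00, hB00, hC00, hD00, hA01, hB01, hC01, hD01, hA02, hB02, hC02, hD02, hA10, hB10, hC10, hD10, hA11, hB11, hC11, hD11, hA12, hB12, hC12, hD12, hA20, hB20, hC20, hD20, hA21, hB21, hC21, hD21, hA22, hB22, hC22, hD22, ht1, ht2, ht3, ht4, ht1', ht2', ht3', ht4', hse0, hsek, horth, horth', mul_zero, zero_mul, mul_one, one_mul, mul_neg, neg_mul, neg_zero, add_zero, zero_add,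
      he01, he12, he20, he10, he21, he02]
    try ring
    try field_simp
    try ring
  have hb20 : (⟪J 2 ζ, ξ 0⟫ : ℝ) = -(Real.cos (φ 2) * a 3) := by
    rw [hζ]
    simp only [Fin.sum_univ_four, map_add, map_smul, hξ0, hξ1, hξ2, hξ3, map_add, map_smul, hJsq, hm01, hm12, hm20, ha10, ha21, ha02, inner_add_left, inner_add_right, real_inner_smul_left, real_inner_smul_right, inner_neg_left, inner_neg_right, smul_neg, neg_neg, hA00, hB00, hC00, hD00, hA01, hB01, hC01, hD01, hA02, hB02, hC02, hD02, hA10, hB10, hC10, hD10, hA11, hB11, hC11, hD11, hA12, hB12, hC12, hD12, hA20, hB20, hC20, hD20, hA21, hB21, hC21, hD21, hA22, hB22, hC22, hD22, ht1, ht2, ht3, ht4, ht1', ht2', ht3', ht4', hse0, hsek, horth, horth', mul_zero, zero_mul, mul_one, one_mul, mul_neg, neg_mul, neg_zero, add_zero, zero_add,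
      he01, he12, he20, he10, he21, he02]
    try ring
    try field_simp
    try ring
  have hb21 : (⟪J 2 ζ, ξ 1⟫ : ℝ) = -(Real.cos (φ 2) * a 2) := by
    rw [hζ]
    simp only [Fin.sum_univ_four, map_add, map_smul, hξ0, hξ1, hξ2, hξ3, map_add, map_smul, hJsq, hm01, hm12, hm20, ha10, ha21, ha02, inner_add_left, inner_add_right, real_inner_smul_left, real_inner_smul_right, inner_neg_left, inner_neg_right, smul_neg, neg_neg, hA00, hB00, hC00, hD00, hA01, hB01, hC01, hD01, hA02, hB02, hC02, hD02, hA10, hB10, hC10, hD10, hA11, hB11, hC11, hD11, hA12, hB12, hC12, hD12, hA20, hB20, hC20, hD20, hA21, hB21, hC21, hD21, hA22, hB22, hC22, hD22, ht1, ht2, ht3, ht4, ht1', ht2', ht3', ht4', hse0, hsek, horth, horth', mul_zero, zero_mul, mul_one, one_mul, mul_neg, neg_mul, neg_zero, add_zero, zero_add,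
      he01, he12, he20, he10, he21, he02]
    try ring
    try field_simp
    try ring
  have hb22 : (⟪J 2 ζ, ξ 2⟫ : ℝ) = Real.cos (φ 2) * a 1 := by
    rw [hζ]
    simp only [Fin.sum_univ_four, map_add, map_smul, hξ0, hξ1, hξ2, hξ3, map_add, map_smul, hJsq, hm01, hm12, hm20, ha10, ha21, ha02, inner_add_left, inner_add_right, real_inner_smul_left, real_inner_smul_right, inner_neg_left, inner_neg_right, smul_neg, neg_neg, hA00, hB00, hC00, hD00, hA01, hB01, hC01, hD01, hA02, hB02, hC02, hD02, hA10, hB10, hC10, hD10, hA11, hB11, hC11, hD11, hA12, hB12, hC12, hD12, hA20, hB20, hC20, hD20, hA21, hB21, hC21, hD21, hA22, hB22, hC22, hD22, ht1, ht2, ht3, ht4, ht1', ht2', ht3', ht4', hse0, hsek, horth, horth', mul_zero, zero_mul, mul_one, one_mul, mul_neg, neg_mul, neg_zero, add_zero, zero_add,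
      he01, he12, he20, he10, he21, he02]
    try ring
    try field_simp
    try ring
  have hb23 : (⟪J 2 ζ, ξ 3⟫ : ℝ) = Real.cos (φ 2) * a 0 := by
    rw [hζ]
    simp only [Fin.sum_univ_four, map_add, map_smul, hξ0, hξ1, hξ2, hξ3, map_add, map_smul, hJsq, hm01, hm12, hm20, ha10, ha21, ha02, inner_add_left, inner_add_right, real_inner_smul_left, real_inner_smul_right, inner_neg_left, inner_neg_right, smul_neg, neg_neg, hA00, hB00, hC00, hD00, hA01, hB01, hC01, hD01, hA02, hB02, hC02, hD02, hA10, hB10, hC10, hD10, hA11, hB11, hC11, hD11, hA12, hB12, hC12, hD12, hA20, hB20, hC20, hD20, hA21, hB21, hC21, hD21, hA22, hB22, hC22, hD22, ht1, ht2, ht3, ht4, ht1', ht2', ht3', ht4', hse0, hsek, horth, horth', mul_zero, zero_mul, mul_one, one_mul, mul_neg, neg_mul, neg_zero, add_zero, zero_add,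
      he01, he12, he20, he10, he21, he02]
    try ring
    try field_simp
    try ring
  have h03 : ∀ m : Fin 3, m = 0 ∨ m = 1 ∨ m = 2 := by decide
  intro j k
  rcases h03 j with rfl | rfl | rfl <;> rcases h03 k with rfl | rfl | rfl
  · simp only [Fin.sum_univ_four, Fin.isValue, Fin.reduceEq, reduceIte, hb00, hb01, hb02, hb03, hb10, hb11, hb12, hb13, hb20, hb21, hb22, hb23]
    linear_combination Real.cos (φ 0) ^ 2 * hnorm
  · simp only [Fin.sum_univ_four, Fin.isValue, Fin.reduceEq, reduceIte, hb00, hb01, hb02, hb03, hb10, hb11, hb12, hb13, hb20, hb21, hb22, hb23]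
    ring
  · simp only [Fin.sum_univ_four, Fin.isValue, Fin.reduceEq, reduceIte, hb00, hb01, hb02, hb03, hb10, hb11, hb12, hb13, hb20, hb21, hb22, hb23]
    ring
  · simp only [Fin.sum_univ_four, Fin.isValue, Fin.reduceEq, reduceIte, hb00, hb01, hb02, hb03, hb10, hb11, hb12, hb13, hb20, hb21, hb22, hb23]
    ring
  · simp only [Fin.sum_univ_four, Fin.isValue, Fin.reduceEq, reduceIte, hb00, hb01, hb02, hb03, hb10, hb11, hb12, hb13, hb20, hb21, hb22, hb23]
    linear_combination Real.cos (φ 1) ^ 2 * hnorm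
  · simp only [Fin.sum_univ_four, Fin.isValue, Fin.reduceEq, reduceIte, hb00, hb01, hb02, hb03, hb10, hb11, hb12, hb13, hb20, hb21, hb22, hb23]
    ring
  · simp only [Fin.sum_univ_four, Fin.isValue, Fin.reduceEq, reduceIte, hb00, hb01, hb02, hb03, hb10, hb11, hb12, hb13, hb20, hb21, hb22, hb23]
    ring
  · simp only [Fin.sum_univ_four, Fin.isValue, Fin.reduceEq, reduceIte, hb00, hb01, hb02, hb03, hb10, hb11, hb12, hb13, hb20, hb21, hb22, hb23]
    ring
  · simp only [Fin.sum_univ_four, Fin.isValue, Fin.reduceEq, reduceIte, hb00, hb01, hb02, hb03, hb10, hb11, hb12, hb13, hb20, hb21, hb22, hb23]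
    linear_combination Real.cos (φ 2) ^ 2 * hnorm
end

section
/- Define F̄_i on w⊥ (the 4-dimensional subspace of H^{n-1} with constant quaternionic Kähler angle (φ₁,φ₂,φ₃), φ₃ < π/2) by F̄_i ξ = F_i ξ / cos(φ_i), where F_i ξ is the orthogonal projection of J_i ξ onto w⊥. Then F̄_i F̄_{i+1} = F̄_{i+2} = -F̄_{i+1} F̄_i and F̄_i² = -id on w⊥, i.e., {F̄₁, F̄₂, F̄₃} is a quaternionic structure on w⊥. -/
open RealInnerProductSpace Real

/-- On `w⊥ = span{ξ₀,ξ₁,ξ₂,ξ₃}` (constant quaternionic Kähler angle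
`(φ₁,φ₂,φ₃)` with `φ₃ < π/2`), the maps `F̄_i = cos(φ_i)⁻¹ F_i` satisfy
`F̄_i F̄_{i+1} = F̄_{i+2} = -F̄_{i+1} F̄_i` and `F̄_i² = -id`, i.e. they form a
quaternionic structure on `w⊥`. -/
theorem stmt_19 {V : Type*}
    [NormedAddCommGroup V] [InnerProductSpace ℝ V] [FiniteDimensional ℝ V]
    (J : Fin 3 → V →ₗ[ℝ] V)
    (hJorth : ∀ i, ∀ x y : V, (⟪J i x, J i y⟫ : ℝ) = ⟪x, y⟫)
    (hJsq : ∀ i, ∀ x : V, J i (J i x) = -x)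
    (hJmul : ∀ i : Fin 3, ∀ x : V, J i (J (i + 1) x) = J (i + 2) x)
    (hJanti : ∀ i : Fin 3, ∀ x : V, J (i + 1) (J i x) = -J (i + 2) x)
    (φ : Fin 3 → ℝ)
    (hφ0 : 0 < φ 0) (hφ01 : φ 0 ≤ φ 1) (hφ12 : φ 1 ≤ φ 2) (hφ2 : φ 2 < π / 2)
    (hφsum : Real.cos (φ 0) + Real.cos (φ 1) < 1 + Real.cos (φ 2))
    (e₀ : V) (e : Fin 3 → V)
    (he₀ : ‖e₀‖ = 1) (he : ∀ i, ‖e i‖ = 1)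
    (htotreal : ∀ j : Fin 3,
      (⟪J j e₀, e₀⟫ : ℝ) = 0 ∧ (∀ k, (⟪J j e₀, e k⟫ : ℝ) = 0) ∧
      (∀ k, (⟪J j (e k), e₀⟫ : ℝ) = 0) ∧ (∀ k l, (⟪J j (e k), e l⟫ : ℝ) = 0))
    (horth : ∀ i, (⟪e₀, e i⟫ : ℝ) = 0)
    (hinner : ∀ i : Fin 3, (⟪e i, e (i + 1)⟫ : ℝ)
      = (Real.cos (φ (i + 2)) - Real.cos (φ i) * Real.cos (φ (i + 1)))
        / (Real.sin (φ i) * Real.sin (φ (i + 1))))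
    (ξ : Fin 4 → V) (hξ0 : ξ 0 = e₀)
    (hξ : ∀ k : Fin 3,
      ξ k.succ = Real.cos (φ k) • J k e₀ + Real.sin (φ k) • J k (e k))
    (W : Submodule ℝ V) (hWdef : W = Submodule.span ℝ (Set.range ξ))
    (Fb : Fin 3 → V → V)
    (hFb : ∀ (i : Fin 3) (x : V),
      Fb i x = (Real.cos (φ i))⁻¹ • ((W.orthogonalProjectionOnto) (J i x) : V)) :
    ∀ i : Fin 3, ∀ x ∈ W,
      Fb i (Fb (i + 1) x) = Fb (i + 2) x ∧
      Fb (i + 1) (Fb i x) = -(Fb (i + 2) x) ∧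
      Fb i (Fb i x) = -x := by
  -- index arithmetic facts in `Fin 3`
  have n11 : ∀ i : Fin 3, i + 1 + 1 = i + 2 := by decide
  have n12 : ∀ i : Fin 3, i + 1 + 2 = i := by decide
  have n21 : ∀ i : Fin 3, i + 2 + 1 = i := by decide
  have n22 : ∀ i : Fin 3, i + 2 + 2 = i + 1 := by decide
  have hd : ∀ i j : Fin 3, i ≠ j → j = i + 1 ∨ j = i + 2 := by decide
  have hcov : ∀ i m : Fin 3, m = i ∨ m = i + 1 ∨ m = i + 2 := by decide
  -- positivity of sines and cosines
  have hφpos : ∀ i : Fin 3, 0 < φ i := by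
    intro i
    rcases (by decide : ∀ i : Fin 3, i = 0 ∨ i = 1 ∨ i = 2) i with rfl | rfl | rfl <;> linarith
  have hφlt : ∀ i : Fin 3, φ i < π / 2 := by
    intro i
    rcases (by decide : ∀ i : Fin 3, i = 0 ∨ i = 1 ∨ i = 2) i with rfl | rfl | rfl <;> linarith
  have hcos : ∀ i : Fin 3, 0 < Real.cos (φ i) := fun i =>
    Real.cos_pos_of_mem_Ioo ⟨by linarith [hφpos i, Real.pi_pos], hφlt i⟩
  have hsin : ∀ i : Fin 3, 0 < Real.sin (φ i) := fun i =>
    Real.sin_pos_of_pos_of_lt_pi (hφpos i) (by linarith [hφlt i, Real.pi_pos])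
  have hcne : ∀ i : Fin 3, Real.cos (φ i) ≠ 0 := fun i => ne_of_gt (hcos i)
  -- basic inner product facts
  have h00 : (⟪e₀, e₀⟫ : ℝ) = 1 := by
    rw [real_inner_self_eq_norm_sq, he₀]; norm_num
  have hee : ∀ k, (⟪e k, e k⟫ : ℝ) = 1 := by
    intro k; rw [real_inner_self_eq_norm_sq, he k]; norm_num
  have hskew : ∀ i : Fin 3, ∀ x y : V, (⟪J i x, y⟫ : ℝ) = -⟪x, J i y⟫ := by
    intro i x y
    have h := hJorth i x (J i y)
    rw [hJsq i y, inner_neg_right] at h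
    linarith
  have hTR : ∀ (j : Fin 3) (u v : V), (u = e₀ ∨ ∃ k, u = e k) →
      (v = e₀ ∨ ∃ k, v = e k) → (⟪J j u, v⟫ : ℝ) = 0 := by
    rintro j u v (rfl | ⟨k, rfl⟩) (rfl | ⟨l, rfl⟩)
    · exact (htotreal j).1
    · exact (htotreal j).2.1 l
    · exact (htotreal j).2.2.1 k
    · exact (htotreal j).2.2.2 k l
  have hJJ : ∀ i j : Fin 3, i ≠ j → ∀ u v : V, (u = e₀ ∨ ∃ k, u = e k) →
      (v = e₀ ∨ ∃ k, v = e k) → (⟪J i u, J j v⟫ : ℝ) = 0 := by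
    intro i j hij u v hu hv
    rcases hd i j hij with rfl | rfl
    · rw [hskew, hJmul, real_inner_comm, hTR (i + 2) v u hv hu, neg_zero]
    · have hx : J i (J (i + 2) v) = -(J (i + 1) v) := by
        have h := hJanti (i + 2) v
        rwa [n21, n22] at h
      rw [hskew, hx, inner_neg_right, neg_neg, real_inner_comm, hTR (i + 1) v u hv hu]
  -- inner products of J-images with the ξ's
  have hA0 : ∀ k : Fin 3, (⟪J k e₀, ξ 0⟫ : ℝ) = 0 := by
    intro k; rw [hξ0]; exact (htotreal k).1
  have hB0 : ∀ k m : Fin 3, (⟪J k (e m), ξ 0⟫ : ℝ) = 0 := by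
    intro k m; rw [hξ0]; exact (htotreal k).2.2.1 m
  have hA : ∀ k l : Fin 3, (⟪J k e₀, ξ l.succ⟫ : ℝ)
      = if l = k then Real.cos (φ k) else 0 := by
    intro k l
    rw [hξ l, inner_add_right, real_inner_smul_right, real_inner_smul_right]
    by_cases h : l = k
    · subst h
      rw [hJorth, hJorth, h00, horth]
      simp
    · rw [hJJ k l (fun hh => h hh.symm) e₀ e₀ (Or.inl rfl) (Or.inl rfl),
        hJJ k l (fun hh => h hh.symm) e₀ (e l) (Or.inl rfl) (Or.inr ⟨l, rfl⟩)]
      simp [h]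
  have hB : ∀ k m l : Fin 3, (⟪J k (e m), ξ l.succ⟫ : ℝ)
      = if l = k then Real.sin (φ k) * ⟪e m, e k⟫ else 0 := by
    intro k m l
    rw [hξ l, inner_add_right, real_inner_smul_right, real_inner_smul_right]
    by_cases h : l = k
    · subst h
      rw [hJorth, hJorth, real_inner_comm e₀ (e m), horth]
      simp
    · rw [hJJ k l (fun hh => h hh.symm) (e m) e₀ (Or.inr ⟨m, rfl⟩) (Or.inl rfl),
        hJJ k l (fun hh => h hh.symm) (e m) (e l) (Or.inr ⟨m, rfl⟩) (Or.inr ⟨l, rfl⟩)]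
      simp [h]
  -- inner products of the base vectors with the ξ's
  have hE0s : ∀ l : Fin 3, (⟪e₀, ξ l.succ⟫ : ℝ) = 0 := by
    intro l
    rw [hξ l, inner_add_right, real_inner_smul_right, real_inner_smul_right,
      real_inner_comm (J l e₀) e₀, real_inner_comm (J l (e l)) e₀,
      (htotreal l).1, (htotreal l).2.2.1 l]
    ring
  have hEms : ∀ m l : Fin 3, (⟪e m, ξ l.succ⟫ : ℝ) = 0 := by
    intro m l
    rw [hξ l, inner_add_right, real_inner_smul_right, real_inner_smul_right,
      real_inner_comm (J l e₀) (e m), real_inner_comm (J l (e l)) (e m),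
      (htotreal l).2.1 m, (htotreal l).2.2.2 l m]
    ring
  have hE00 : (⟪e₀, ξ 0⟫ : ℝ) = 1 := by rw [hξ0]; exact h00
  have hEm0 : ∀ m : Fin 3, (⟪e m, ξ 0⟫ : ℝ) = 0 := by
    intro m; rw [hξ0, real_inner_comm]; exact horth m
  -- the ξ's are orthonormal
  have hξ00 : (⟪ξ 0, ξ 0⟫ : ℝ) = 1 := by rw [hξ0]; exact h00
  have hξs0 : ∀ l : Fin 3, (⟪ξ l.succ, ξ 0⟫ : ℝ) = 0 := by
    intro l; rw [real_inner_comm, hξ0]; exact hE0s l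
  have hξξ : ∀ k l : Fin 3, (⟪ξ k.succ, ξ l.succ⟫ : ℝ) = if k = l then 1 else 0 := by
    intro k l
    rw [hξ k, inner_add_left, real_inner_smul_left, real_inner_smul_left, hA, hB]
    by_cases h : k = l
    · subst h
      rw [if_pos rfl, if_pos rfl, if_pos rfl, hee]
      linear_combination Real.sin_sq_add_cos_sq (φ k)
    · rw [if_neg (fun hh => h hh.symm), if_neg (fun hh => h hh.symm), if_neg h]
      ring
  -- projection machinery
  have hξmem : ∀ l : Fin 4, ξ l ∈ W := by
    intro l; rw [hWdef]; exact Submodule.subset_span ⟨l, rfl⟩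
  have hproj : ∀ v p : V, p ∈ W → (∀ l : Fin 4, (⟪v - p, ξ l⟫ : ℝ) = 0) →
      ((W.orthogonalProjectionOnto v : V) = p) := by
    intro v p hp h
    rw [← Submodule.starProjection_apply]
    refine Submodule.eq_starProjection_of_mem_of_inner_eq_zero hp ?_
    intro w hw
    rw [hWdef] at hw
    induction hw using Submodule.span_induction with
    | mem x hx => obtain ⟨l, rfl⟩ := hx; exact h l
    | zero => exact inner_zero_right _
    | add x y _ _ hx hy => rw [inner_add_right, hx, hy, add_zero]
    | smul a x _ hx => rw [real_inner_smul_right, hx, mul_zero]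
  -- the action of Fb on the basis
  have hF0 : ∀ i : Fin 3, Fb i (ξ 0) = ξ i.succ := by
    intro i
    have hp : ((W.orthogonalProjectionOnto (J i (ξ 0)) : V)) = Real.cos (φ i) • ξ i.succ := by
      refine hproj _ _ (Submodule.smul_mem _ _ (hξmem _)) ?_
      intro l
      rw [hξ0, inner_sub_left, real_inner_smul_left]
      induction l using Fin.cases with
      | zero => rw [hA0, hξs0]; ring
      | succ m =>
        rw [hA, hξξ]
        by_cases h : m = i
        · subst h; simp
        · rw [if_neg h, if_neg (fun hh => h hh.symm)]; ring
    rw [hFb, hp, smul_smul, inv_mul_cancel₀ (hcne i), one_smul]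
  have hFi : ∀ i : Fin 3, Fb i (ξ i.succ) = -ξ 0 := by
    intro i
    have hv : J i (ξ i.succ)
        = (-Real.cos (φ i)) • e₀ + (-Real.sin (φ i)) • e i := by
      rw [hξ i, map_add, map_smul, map_smul, hJsq, hJsq, smul_neg, smul_neg,
        neg_smul, neg_smul]
    have hp : ((W.orthogonalProjectionOnto (J i (ξ i.succ)) : V))
        = -(Real.cos (φ i) • ξ 0) := by
      refine hproj _ _ (Submodule.neg_mem _ (Submodule.smul_mem _ _ (hξmem _))) ?_
      intro l
      rw [hv, inner_sub_left, inner_add_left, real_inner_smul_left,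
        real_inner_smul_left, inner_neg_left, real_inner_smul_left]
      induction l using Fin.cases with
      | zero => rw [hE00, hEm0, hξ00]; ring
      | succ m => rw [hE0s, hEms, hξ0, hE0s]; ring
    rw [hFb, hp, smul_neg, smul_smul, inv_mul_cancel₀ (hcne i), one_smul]
  have hF1 : ∀ i : Fin 3, Fb i (ξ (i + 1).succ) = ξ (i + 2).succ := by
    intro i
    have hv : J i (ξ (i + 1).succ)
        = Real.cos (φ (i + 1)) • J (i + 2) e₀
          + Real.sin (φ (i + 1)) • J (i + 2) (e (i + 1)) := by
      rw [hξ (i + 1), map_add, map_smul, map_smul, hJmul, hJmul]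
    have hin : (⟪e (i + 1), e (i + 2)⟫ : ℝ)
        = (Real.cos (φ i) - Real.cos (φ (i + 1)) * Real.cos (φ (i + 2)))
          / (Real.sin (φ (i + 1)) * Real.sin (φ (i + 2))) := by
      have h := hinner (i + 1)
      rwa [n11, n12] at h
    have hp : ((W.orthogonalProjectionOnto (J i (ξ (i + 1).succ)) : V))
        = Real.cos (φ i) • ξ (i + 2).succ := by
      refine hproj _ _ (Submodule.smul_mem _ _ (hξmem _)) ?_
      intro l
      rw [hv, inner_sub_left, inner_add_left, real_inner_smul_left,
        real_inner_smul_left, real_inner_smul_left]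
      induction l using Fin.cases with
      | zero => rw [hA0, hB0, hξs0]; ring
      | succ m =>
        rw [hA, hB, hξξ]
        by_cases h : m = i + 2
        · subst h
          rw [if_pos rfl, if_pos rfl, if_pos rfl, hin]
          have h1 := (ne_of_gt (hsin (i + 1)))
          have h2 := (ne_of_gt (hsin (i + 2)))
          field_simp
          ring
        · rw [if_neg h, if_neg h, if_neg (fun hh => h hh.symm)]; ring
    rw [hFb, hp, smul_smul, inv_mul_cancel₀ (hcne i), one_smul]
  have hF2 : ∀ i : Fin 3, Fb i (ξ (i + 2).succ) = -ξ (i + 1).succ := by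
    intro i
    have hJm : ∀ x : V, J i (J (i + 2) x) = -(J (i + 1) x) := by
      intro x
      have h := hJanti (i + 2) x
      rwa [n21, n22] at h
    have hv : J i (ξ (i + 2).succ)
        = (-Real.cos (φ (i + 2))) • J (i + 1) e₀
          + (-Real.sin (φ (i + 2))) • J (i + 1) (e (i + 2)) := by
      rw [hξ (i + 2), map_add, map_smul, map_smul, hJm, hJm, smul_neg, smul_neg,
        neg_smul, neg_smul]
    have hin : (⟪e (i + 1), e (i + 2)⟫ : ℝ)
        = (Real.cos (φ i) - Real.cos (φ (i + 1)) * Real.cos (φ (i + 2)))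
          / (Real.sin (φ (i + 1)) * Real.sin (φ (i + 2))) := by
      have h := hinner (i + 1)
      rwa [n11, n12] at h
    have hp : ((W.orthogonalProjectionOnto (J i (ξ (i + 2).succ)) : V))
        = -(Real.cos (φ i) • ξ (i + 1).succ) := by
      refine hproj _ _ (Submodule.neg_mem _ (Submodule.smul_mem _ _ (hξmem _))) ?_
      intro l
      rw [hv, inner_sub_left, inner_add_left, real_inner_smul_left,
        real_inner_smul_left, inner_neg_left, real_inner_smul_left]
      induction l using Fin.cases with
      | zero => rw [hA0, hB0, hξs0]; ring
      | succ m =>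
        rw [hA, hB, hξξ]
        by_cases h : m = i + 1
        · subst h
          rw [if_pos rfl, if_pos rfl, if_pos rfl, real_inner_comm (e (i + 1)) (e (i + 2)), hin]
          have h1 := (ne_of_gt (hsin (i + 1)))
          have h2 := (ne_of_gt (hsin (i + 2)))
          field_simp
          ring
        · rw [if_neg h, if_neg h, if_neg (fun hh => h hh.symm)]; ring
    rw [hFb, hp, smul_neg, smul_smul, inv_mul_cancel₀ (hcne i), one_smul]
  -- derived table entries
  have hG1 : ∀ i : Fin 3, Fb (i + 1) (ξ i.succ) = -ξ (i + 2).succ := by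
    intro i
    have h := hF2 (i + 1)
    rwa [n12, n11] at h
  have hG2 : ∀ i : Fin 3, Fb (i + 1) (ξ (i + 2).succ) = ξ i.succ := by
    intro i
    have h := hF1 (i + 1)
    rwa [n11, n12] at h
  have hH1 : ∀ i : Fin 3, Fb (i + 2) (ξ i.succ) = ξ (i + 1).succ := by
    intro i
    have h := hF1 (i + 2)
    rwa [n21, n22] at h
  have hH2 : ∀ i : Fin 3, Fb (i + 2) (ξ (i + 1).succ) = -ξ i.succ := by
    intro i
    have h := hF2 (i + 2)
    rwa [n22, n21] at h
  -- linearity of Fb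
  have hFadd : ∀ (i : Fin 3) (x y : V), Fb i (x + y) = Fb i x + Fb i y := by
    intro i x y
    simp [hFb, smul_add]
  have hFsmul : ∀ (i : Fin 3) (c : ℝ) (x : V), Fb i (c • x) = c • Fb i x := by
    intro i c x
    rw [hFb, hFb, map_smul, map_smul, Submodule.coe_smul, smul_comm]
  have hFneg : ∀ (i : Fin 3) (x : V), Fb i (-x) = -Fb i x := by
    intro i x
    simp [hFb, smul_neg]
  have hFzero : ∀ i : Fin 3, Fb i 0 = 0 := by
    intro i
    simp [hFb]
  -- main statement by induction on the span
  intro i x hx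
  rw [hWdef] at hx
  induction hx using Submodule.span_induction with
  | mem x hx =>
    obtain ⟨k, rfl⟩ := hx
    induction k using Fin.cases with
    | zero =>
      refine ⟨?_, ?_, ?_⟩
      · rw [hF0 (i + 1), hF1 i, hF0 (i + 2)]
      · rw [hF0 i, hG1 i, hF0 (i + 2)]
      · rw [hF0 i, hFi i]
    | succ m =>
      rcases hcov i m with rfl | rfl | rfl
      · refine ⟨?_, ?_, ?_⟩
        · rw [hG1 m, hFneg, hF2 m, neg_neg, hH1 m]
        · rw [hFi m, hFneg, hF0 (m + 1), hH1 m]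
        · rw [hFi m, hFneg, hF0 m]
      · refine ⟨?_, ?_, ?_⟩
        · rw [hFi (i + 1), hFneg, hF0 i, hH2 i]
        · rw [hF1 i, hG2 i, hH2 i, neg_neg]
        · rw [hF1 i, hF2 i]
      · refine ⟨?_, ?_, ?_⟩
        · rw [hG2 i, hFi i, hFi (i + 2)]
        · rw [hF2 i, hFneg, hFi (i + 1), hFi (i + 2)]
        · rw [hF2 i, hFneg, hF1 i]
  | zero =>
    refine ⟨?_, ?_, ?_⟩ <;> simp [hFzero]
  | add x y _ _ hx hy =>
    obtain ⟨hx1, hx2, hx3⟩ := hx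
    obtain ⟨hy1, hy2, hy3⟩ := hy
    refine ⟨?_, ?_, ?_⟩
    · rw [hFadd (i + 1), hFadd i, hx1, hy1, hFadd (i + 2)]
    · rw [hFadd i, hFadd (i + 1), hx2, hy2, hFadd (i + 2), neg_add]
    · rw [hFadd i, hFadd i, hx3, hy3, neg_add]
  | smul a x _ hx =>
    obtain ⟨hx1, hx2, hx3⟩ := hx
    refine ⟨?_, ?_, ?_⟩
    · rw [hFsmul (i + 1), hFsmul i, hx1, hFsmul (i + 2)]
    · rw [hFsmul i, hFsmul (i + 1), hx2, hFsmul (i + 2), smul_neg]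
    · rw [hFsmul i, hFsmul i, hx3, smul_neg]
end
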